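/- arXiv:1401.7091 — 5 statements merged into one kernel-verified Lean document; each statement's English description precedes it below -/
import Mathlib

section
/- Let 2 ≤ d ≤ n−1 and let B'_{n,d} = B_{n,d} − {(u_{n−d+1}, u_{n−d+2})} + {(u_{n−d+1}, u_1)}. Then q(B'_{n,d}) > q(B_{n,d}). -/
open Matrix

namespace SignlessDigraph

variable {n : ℕ}

/-- Real adjacency matrix of a (multi)digraph on `Fin n`, given by arc multiplicities. -/
def adjMat (W : Fin n → Fin n → ℕ) : Matrix (Fin n) (Fin n) ℝ :=
  fun i j => (W i j : ℝ)

/-- Outdegree of a vertex. -/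
def outdeg (W : Fin n → Fin n → ℕ) (i : Fin n) : ℕ := ∑ j, W i j

/-- Indegree of a vertex. -/
def indeg (W : Fin n → Fin n → ℕ) (i : Fin n) : ℕ := ∑ j, W j i

/-- The signless Laplacian matrix `Q(D) = diag(outdegrees) + A(D)`. -/
noncomputable def Qmat (W : Fin n → Fin n → ℕ) : Matrix (Fin n) (Fin n) ℝ :=
  Matrix.diagonal (fun i => (outdeg W i : ℝ)) + adjMat W

/-- Spectral radius of a real matrix: the maximum modulus of its (complex) eigenvalues. -/
noncomputable def radius (M : Matrix (Fin n) (Fin n) ℝ) : ℝ :=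
  sSup {r : ℝ | ∃ μ ∈ spectrum ℂ (M.map ((↑) : ℝ → ℂ)), r = ‖μ‖}

/-- The signless Laplacian spectral radius `q(D)`. -/
noncomputable def q (W : Fin n → Fin n → ℕ) : ℝ := radius (Qmat W)

/-- The (adjacency) spectral radius `ρ(D)`. -/
noncomputable def rho (W : Fin n → Fin n → ℕ) : ℝ := radius (adjMat W)

/-- A digraph is simple: no loops and no multiple arcs. -/
def Simple (W : Fin n → Fin n → ℕ) : Prop :=
  (∀ i, W i i = 0) ∧ ∀ i j, W i j ≤ 1

/-- Strong connectivity: every vertex is reachable from every vertex by a directed path. -/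
def StronglyConnected (W : Fin n → Fin n → ℕ) : Prop :=
  ∀ i j : Fin n, Relation.ReflTransGen (fun a b => W a b ≠ 0) i j

/-- Isomorphism of digraphs on `Fin n`. -/
def Iso (W W' : Fin n → Fin n → ℕ) : Prop :=
  ∃ e : Fin n ≃ Fin n, ∀ i j, W (e i) (e j) = W' i j

/-- The clique number: maximum size of a set of vertices with all arcs in both directions. -/
noncomputable def cliqueNum (W : Fin n → Fin n → ℕ) : ℕ :=
  sSup {d : ℕ | ∃ s : Finset (Fin n), s.card = d ∧ ∀ i ∈ s, ∀ j ∈ s, i ≠ j → W i j ≠ 0}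

/-- `W` has a directed cycle of length `c`. -/
def HasCycleLen (W : Fin n → Fin n → ℕ) (c : ℕ) : Prop :=
  ∃ (hc : 2 ≤ c) (p : Fin c → Fin n), Function.Injective p ∧
    ∀ i : Fin c, W (p i) (p ⟨((i : ℕ) + 1) % c, Nat.mod_lt _ (by omega)⟩) ≠ 0

/-- The girth: length of a shortest directed cycle. -/
noncomputable def girth (W : Fin n → Fin n → ℕ) : ℕ := sInf {c | HasCycleLen W c}

/-- The complete digraph `K_n^↔`. -/
def Kcomp (n : ℕ) : Fin n → Fin n → ℕ := fun i j => if i = j then 0 else 1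

/-- The directed cycle `C_n^→`, with arcs `i → i+1 (mod n)`. -/
def cyc (n : ℕ) : Fin n → Fin n → ℕ := fun i j => if (j : ℕ) = ((i : ℕ) + 1) % n then 1 else 0

/-- The digraph `B_{n,d}` (for `2 ≤ d ≤ n-1`): a complete digraph on the vertices
`0, …, d-1` together with a directed path `0 → d → d+1 → ⋯ → n-1 → 1`
(the path `u_1 u_2 ⋯ u_{n-d+2}` with `u_1 = 0`, `u_{n-d+2} = 1`,
and internal vertices `d, …, n-1`). -/
def B (n d : ℕ) : Fin n → Fin n → ℕ := fun i j =>
  if i ≠ j ∧ (i : ℕ) < d ∧ (j : ℕ) < d then 1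
  else if (i : ℕ) = 0 ∧ (j : ℕ) = d then 1
  else if d ≤ (i : ℕ) ∧ (j : ℕ) = (i : ℕ) + 1 then 1
  else if (i : ℕ) = n - 1 ∧ (j : ℕ) = 1 then 1
  else 0

/-- `B'_{n,d} = B_{n,d} − (u_{n-d+1}, u_{n-d+2}) + (u_{n-d+1}, u_1)`, i.e. the arc
`n-1 → 1` is replaced by the arc `n-1 → 0`. -/
def B' (n d : ℕ) : Fin n → Fin n → ℕ := fun i j =>
  if (i : ℕ) = n - 1 ∧ (j : ℕ) = 1 then 0
  else if (i : ℕ) = n - 1 ∧ (j : ℕ) = 0 then 1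
  else B n d i j

/-- The digraph `C_{n,g}` (for `2 ≤ g ≤ n-1`): vertices `u_1, …, u_n` are `0, …, n-1`,
with arcs `i → i+1` for `0 ≤ i ≤ n-2` together with the arcs `g-1 → 0` and `n-1 → 0`. -/
def Cng (n g : ℕ) : Fin n → Fin n → ℕ := fun i j =>
  if (j : ℕ) = (i : ℕ) + 1 then 1
  else if ((i : ℕ) = g - 1 ∨ (i : ℕ) = n - 1) ∧ (j : ℕ) = 0 then 1
  else 0

/-- `C'_{n,g} = C_{n,g} − (u_n, u_1) + (u_n, u_g)`, i.e. the arc `n-1 → 0` is replaced by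
the arc `n-1 → g-1`. -/
def Cng' (n g : ℕ) : Fin n → Fin n → ℕ := fun i j =>
  if (i : ℕ) = n - 1 ∧ (j : ℕ) = 0 then 0
  else if (i : ℕ) = n - 1 ∧ (j : ℕ) = g - 1 then 1
  else Cng n g i j

/-- The θ-digraph `θ(a,b,c)` realized on `Fin n` (intended for `n = a + b + c + 2`):
vertex `0` is the common initial vertex of the paths `P_{a+2}`, `P_{b+2}` and terminal
vertex of `P_{c+2}`; vertex `1` is the common terminal vertex of `P_{a+2}`, `P_{b+2}`
and initial vertex of `P_{c+2}`; the internal vertices of the three paths are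
`2, …, a+1`, `a+2, …, a+b+1` and `a+b+2, …, a+b+c+1` respectively. -/
def theta (n a b c : ℕ) : Fin n → Fin n → ℕ := fun i j =>
  if ((a = 0 ∧ (i : ℕ) = 0 ∧ (j : ℕ) = 1) ∨
      (a ≠ 0 ∧ (((i : ℕ) = 0 ∧ (j : ℕ) = 2) ∨
        (2 ≤ (i : ℕ) ∧ (i : ℕ) ≤ a ∧ (j : ℕ) = (i : ℕ) + 1) ∨
        ((i : ℕ) = a + 1 ∧ (j : ℕ) = 1))) ∨
      (b = 0 ∧ (i : ℕ) = 0 ∧ (j : ℕ) = 1) ∨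
      (b ≠ 0 ∧ (((i : ℕ) = 0 ∧ (j : ℕ) = a + 2) ∨
        (a + 2 ≤ (i : ℕ) ∧ (i : ℕ) ≤ a + b ∧ (j : ℕ) = (i : ℕ) + 1) ∨
        ((i : ℕ) = a + b + 1 ∧ (j : ℕ) = 1))) ∨
      (c = 0 ∧ (i : ℕ) = 1 ∧ (j : ℕ) = 0) ∨
      (c ≠ 0 ∧ (((i : ℕ) = 1 ∧ (j : ℕ) = a + b + 2) ∨
        (a + b + 2 ≤ (i : ℕ) ∧ (i : ℕ) ≤ a + b + c ∧ (j : ℕ) = (i : ℕ) + 1) ∨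
        ((i : ℕ) = a + b + c + 1 ∧ (j : ℕ) = 0))))
  then 1 else 0

/-- The digraph `K→(n,k,m)`: the vertex set is partitioned into
`V₁ = {0,…,m-1}`, `S = {m,…,m+k-1}`, `V₂ = {m+k,…,n-1}`; it is the complete digraph
with all arcs from `V₂` to `V₁` removed. -/
def Kdir (n k m : ℕ) : Fin n → Fin n → ℕ := fun i j =>
  if i = j then 0
  else if m + k ≤ (i : ℕ) ∧ (j : ℕ) < m then 0
  else 1

/-- The digraph `D_{uv}` obtained from `D` by deleting the arc `(u,v)`, identifying `u`
with `v` (the merged vertex is `v`; the vertex `u` becomes isolated) and deleting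
multiple arcs (and loops). -/
def contract (W : Fin n → Fin n → ℕ) (u v : Fin n) : Fin n → Fin n → ℕ :=
  fun i j =>
    if i = u ∨ j = u ∨ i = j then 0
    else if i = v then min 1 (W v j + W u j)
    else if j = v then min 1 (W i v + W i u)
    else min 1 (W i j)

/-- The digraph `D^w` obtained from `D` by subdividing the arc `(u,v)` with a new
vertex `w` (realized as the last vertex of `Fin (n+1)`). -/
def subdivide (W : Fin n → Fin n → ℕ) (u v : Fin n) : Fin (n + 1) → Fin (n + 1) → ℕ :=
  fun i j =>
    if hi : (i : ℕ) < n then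
      if hj : (j : ℕ) < n then
        if (⟨(i : ℕ), hi⟩ : Fin n) = u ∧ (⟨(j : ℕ), hj⟩ : Fin n) = v then 0
        else W ⟨(i : ℕ), hi⟩ ⟨(j : ℕ), hj⟩
      else if (⟨(i : ℕ), hi⟩ : Fin n) = u then 1 else 0
    else
      if hj : (j : ℕ) < n then (if (⟨(j : ℕ), hj⟩ : Fin n) = v then 1 else 0)
      else 0



section Aux
set_option linter.unusedSectionVars false
open scoped ENNReal NNReal
open Filter

lemma specSet_eq (M : Matrix (Fin n) (Fin n) ℝ) :
    {r : ℝ | ∃ μ ∈ spectrum ℂ (M.map ((↑) : ℝ → ℂ)), r = ‖μ‖}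
      = norm '' (spectrum ℂ (M.map ((↑) : ℝ → ℂ))) := by
  ext r
  simp only [Set.mem_setOf_eq, Set.mem_image]
  constructor
  · rintro ⟨μ, hμ, rfl⟩; exact ⟨μ, hμ, rfl⟩
  · rintro ⟨μ, hμ, rfl⟩; exact ⟨μ, hμ, rfl⟩

lemma radius_mem (hn : 0 < n) (M : Matrix (Fin n) (Fin n) ℝ) :
    ∃ μ ∈ spectrum ℂ (M.map ((↑) : ℝ → ℂ)), ‖μ‖ = radius M := by
  haveI : Nonempty (Fin n) := ⟨⟨0, hn⟩⟩
  letI := Matrix.linftyOpNormedRing (n := Fin n) (α := ℂ)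
  letI := Matrix.linftyOpNormedAlgebra (R := ℂ) (n := Fin n) (α := ℂ)
  letI : CompleteSpace (Matrix (Fin n) (Fin n) ℂ) := FiniteDimensional.complete ℂ _
  have hne : (spectrum ℂ (M.map ((↑) : ℝ → ℂ))).Nonempty := spectrum.nonempty _
  have hfin : (norm '' (spectrum ℂ (M.map ((↑) : ℝ → ℂ)))).Finite :=
    (Matrix.finite_spectrum _).image _
  have hmem : radius M ∈ norm '' (spectrum ℂ (M.map ((↑) : ℝ → ℂ))) := by
    rw [radius, specSet_eq]
    exact Set.Nonempty.csSup_mem (hne.image _) hfin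
  obtain ⟨μ, hμ, h⟩ := hmem
  exact ⟨μ, hμ, h⟩

lemma radius_ub (M : Matrix (Fin n) (Fin n) ℝ) {μ : ℂ}
    (hμ : μ ∈ spectrum ℂ (M.map ((↑) : ℝ → ℂ))) : ‖μ‖ ≤ radius M := by
  rw [radius, specSet_eq]
  have hfin : (norm '' (spectrum ℂ (M.map ((↑) : ℝ → ℂ)))).Finite :=
    (Matrix.finite_spectrum _).image _
  exact le_csSup hfin.bddAbove ⟨μ, hμ, rfl⟩

lemma radius_nonneg (hn : 0 < n) (M : Matrix (Fin n) (Fin n) ℝ) : 0 ≤ radius M := by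
  obtain ⟨μ, _, h⟩ := radius_mem hn M
  rw [← h]; exact norm_nonneg _

lemma exists_eigenvector (M : Matrix (Fin n) (Fin n) ℂ) {μ : ℂ}
    (hμ : μ ∈ spectrum ℂ M) : ∃ v : Fin n → ℂ, v ≠ 0 ∧ M.mulVec v = μ • v := by
  have h1 : μ ∈ spectrum ℂ (Matrix.toLinAlgEquiv' M) := by
    rwa [AlgEquiv.spectrum_eq Matrix.toLinAlgEquiv' M]
  have h2 : Module.End.HasEigenvalue (Matrix.toLinAlgEquiv' M : Module.End ℂ (Fin n → ℂ)) μ :=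
    Module.End.HasEigenvalue.of_mem_spectrum h1
  obtain ⟨v, hv⟩ := h2.exists_hasEigenvector
  refine ⟨v, hv.2, ?_⟩
  have := hv.apply_eq_smul
  rwa [Matrix.toLinAlgEquiv'_apply] at this


lemma pow_entry_nonneg {M : Matrix (Fin n) (Fin n) ℝ} (hM : ∀ i j, 0 ≤ M i j) :
    ∀ k i j, 0 ≤ (M ^ k) i j := by
  intro k
  induction k with
  | zero => intro i j; simp [Matrix.one_apply]; positivity
  | succ k ih =>
    intro i j
    rw [pow_succ, Matrix.mul_apply]
    exact Finset.sum_nonneg fun l _ => mul_nonneg (ih i l) (hM l j)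

lemma le_radius_of_subinvariant (hn : 0 < n) (M : Matrix (Fin n) (Fin n) ℝ)
    (hM : ∀ i j, 0 ≤ M i j) {z : Fin n → ℝ} (hz : ∀ i, 0 < z i)
    {c : ℝ} (hc : 0 ≤ c) (hsub : ∀ i, c * z i ≤ M.mulVec z i) : c ≤ radius M := by
  haveI : Nonempty (Fin n) := ⟨⟨0, hn⟩⟩
  -- iterated subinvariance
  have key : ∀ k i, c ^ k * z i ≤ ((M ^ k).mulVec z) i := by
    intro k
    induction k with
    | zero => intro i; simp [Matrix.one_mulVec]
    | succ k ih =>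
      intro i
      have h1 : ((M ^ (k + 1)).mulVec z) i = ∑ j, M i j * ((M ^ k).mulVec z) j := by
        rw [pow_succ', ← Matrix.mulVec_mulVec]
        simp [Matrix.mulVec, dotProduct]
      rw [h1]
      have h2 : ∑ j, M i j * (c ^ k * z j) ≤ ∑ j, M i j * ((M ^ k).mulVec z) j :=
        Finset.sum_le_sum fun j _ => mul_le_mul_of_nonneg_left (ih j) (hM i j)
      have h3 : c ^ (k + 1) * z i ≤ ∑ j, M i j * (c ^ k * z j) := by
        have : ∑ j, M i j * (c ^ k * z j) = c ^ k * ∑ j, M i j * z j := by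
          rw [Finset.mul_sum]; congr 1; ext j; ring
        rw [this]
        calc c ^ (k + 1) * z i = c ^ k * (c * z i) := by ring
          _ ≤ c ^ k * ∑ j, M i j * z j := by
              refine mul_le_mul_of_nonneg_left ?_ (pow_nonneg hc k)
              simpa [Matrix.mulVec, dotProduct] using hsub i
      exact h3.trans h2
  -- pass to norms
  letI := Matrix.linftyOpNormedRing (n := Fin n) (α := ℂ)
  letI := Matrix.linftyOpNormedAlgebra (R := ℂ) (n := Fin n) (α := ℂ)
  letI : CompleteSpace (Matrix (Fin n) (Fin n) ℂ) := FiniteDimensional.complete ℂ _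
  set A := M.map ((↑) : ℝ → ℂ) with hA
  have hpow : ∀ k, A ^ k = (M ^ k).map ((↑) : ℝ → ℂ) := by
    intro k
    induction k with
    | zero => simp [hA]
    | succ k ih =>
      rw [pow_succ, pow_succ, ih, hA]
      ext i j
      simp only [Matrix.mul_apply, Matrix.map_apply]
      push_cast
      rfl
  set zC : Fin n → ℂ := fun i => (z i : ℂ) with hzC
  obtain ⟨i₀, -, hi₀⟩ := Finset.exists_max_image Finset.univ z ⟨Classical.arbitrary _, Finset.mem_univ _⟩
  have hzCnorm : ‖zC‖ = z i₀ := by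
    apply le_antisymm
    · apply (pi_norm_le_iff_of_nonneg (hz i₀).le).mpr
      intro i
      simp only [hzC, Complex.norm_real, Real.norm_eq_abs, abs_of_nonneg (hz i).le]
      exact hi₀ i (Finset.mem_univ i)
    · calc z i₀ = ‖zC i₀‖ := by
            simp [hzC, Complex.norm_real, abs_of_nonneg (hz i₀).le]
        _ ≤ ‖zC‖ := norm_le_pi_norm zC i₀
  have hnorm : ∀ k, c ^ k ≤ ‖A ^ k‖ := by
    intro k
    have hmv : (A ^ k).mulVec zC = fun i => (((M ^ k).mulVec z) i : ℂ) := by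
      funext i
      simp only [hpow k, Matrix.mulVec, dotProduct, Matrix.map_apply, hzC]
      push_cast
      rfl
    have h1 : c ^ k * z i₀ ≤ ‖((A ^ k).mulVec zC) i₀‖ := by
      rw [hmv]
      simp only [Complex.norm_real, Real.norm_eq_abs]
      exact (key k i₀).trans (le_abs_self _)
    have h2 : ‖((A ^ k).mulVec zC) i₀‖ ≤ ‖A ^ k‖ * ‖zC‖ :=
      (norm_le_pi_norm _ i₀).trans (Matrix.linfty_opNorm_mulVec _ _)
    have := h1.trans h2
    rw [hzCnorm] at this
    exact le_of_mul_le_mul_right (by linarith) (hz i₀)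
  have hnn : ∀ k, c.toNNReal ^ k ≤ ‖A ^ k‖₊ := by
    intro k
    rw [← Real.toNNReal_pow hc, ← norm_toNNReal]
    exact Real.toNNReal_mono (hnorm k)
  have h3 : (c.toNNReal : ℝ≥0∞) ≤ spectralRadius ℂ A := by
    refine ge_of_tendsto (spectrum.pow_nnnorm_pow_one_div_tendsto_nhds_spectralRadius A) ?_
    filter_upwards [eventually_ge_atTop 1] with k hk
    have hk0 : (k : ℝ) ≠ 0 := by positivity
    calc (c.toNNReal : ℝ≥0∞) = ((c.toNNReal : ℝ≥0∞) ^ (k : ℕ)) ^ (1 / (k : ℝ)) := by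
          rw [← ENNReal.rpow_natCast, ← ENNReal.rpow_mul, mul_one_div_cancel hk0,
            ENNReal.rpow_one]
      _ ≤ ((‖A ^ k‖₊ : ℝ≥0∞)) ^ (1 / (k : ℝ)) := by
          refine ENNReal.rpow_le_rpow ?_ (by positivity)
          rw [← ENNReal.coe_pow]
          exact ENNReal.coe_le_coe.mpr (hnn k)
  have h4 : spectralRadius ℂ A ≤ ((radius M).toNNReal : ℝ≥0∞) := by
    rw [spectralRadius]
    refine iSup₂_le fun μ hμ => ?_
    refine ENNReal.coe_le_coe.mpr ?_
    rw [← norm_toNNReal]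
    exact Real.toNNReal_mono (by
      exact radius_ub M hμ)
  have h5 := ENNReal.coe_le_coe.mp (h3.trans h4)
  calc c = (c.toNNReal : ℝ) := by rw [Real.coe_toNNReal _ hc]
    _ ≤ ((radius M).toNNReal : ℝ) := by exact_mod_cast h5
    _ = radius M := Real.coe_toNNReal _ (radius_nonneg hn M)


lemma mulVec_apply (M : Matrix (Fin n) (Fin n) ℝ) (x : Fin n → ℝ) (i : Fin n) :
    M.mulVec x i = ∑ j, M i j * x j := by
  simp [Matrix.mulVec, dotProduct]

/-- If every entry of `M` is nonnegative, its diagonal is positive, and its support digraph is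
strongly connected, then some power of `M` has all entries positive. -/
lemma exists_pow_pos {M : Matrix (Fin n) (Fin n) ℝ} (hM : ∀ i j, 0 ≤ M i j)
    (hdiag : ∀ i, 0 < M i i)
    (hsc : ∀ i j : Fin n, Relation.ReflTransGen (fun a b => M a b ≠ 0) i j) :
    ∃ N, 0 < N ∧ ∀ i j, 0 < (M ^ N) i j := by
  have hup : ∀ k i j, 0 < (M ^ k) i j → 0 < (M ^ (k + 1)) i j := by
    intro k i j h
    rw [pow_succ, Matrix.mul_apply]
    refine lt_of_lt_of_le (mul_pos h (hdiag j))
      (Finset.single_le_sum (f := fun l => (M ^ k) i l * M l j)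
        (fun l _ => mul_nonneg (pow_entry_nonneg hM k i l) (hM l j)) (Finset.mem_univ j))
  have hmono : ∀ k m i j, k ≤ m → 0 < (M ^ k) i j → 0 < (M ^ m) i j := by
    intro k m i j hkm
    induction m, hkm using Nat.le_induction with
    | base => exact id
    | succ m hm ih => exact fun h => hup m i j (ih h)
  have hex : ∀ i j : Fin n, ∃ k, 0 < (M ^ k) i j := by
    intro i j
    induction hsc i j with
    | refl => exact ⟨0, by simp [Matrix.one_apply]⟩
    | @tail b c hab hbc ih =>
      obtain ⟨k, hk⟩ := ih
      refine ⟨k + 1, ?_⟩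
      rw [pow_succ, Matrix.mul_apply]
      have hbc' : 0 < M b c := lt_of_le_of_ne (hM b c) (Ne.symm hbc)
      refine lt_of_lt_of_le (mul_pos hk hbc')
        (Finset.single_le_sum (f := fun l => (M ^ k) i l * M l c)
          (fun l _ => mul_nonneg (pow_entry_nonneg hM k i l) (hM l c)) (Finset.mem_univ b))
  choose f hf using hex
  refine ⟨1 + ∑ p : Fin n × Fin n, f p.1 p.2, by omega, fun i j => ?_⟩
  refine hmono _ _ i j ?_ (hf i j)
  have : f i j ≤ ∑ p : Fin n × Fin n, f p.1 p.2 :=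
    Finset.single_le_sum (f := fun p : Fin n × Fin n => f p.1 p.2)
      (fun p _ => Nat.zero_le _) (Finset.mem_univ (i, j))
  omega

/-- Strict subinvariance at one coordinate pushes the spectral radius strictly above `q`. -/
lemma lt_radius_of_strict (hn : 0 < n) (M : Matrix (Fin n) (Fin n) ℝ)
    (hM : ∀ i j, 0 ≤ M i j) (hpos : ∃ N, 0 < N ∧ ∀ i j, 0 < (M ^ N) i j)
    {x : Fin n → ℝ} (hx : ∀ i, 0 ≤ x i) {i₀ : Fin n} (hx0 : 0 < x i₀)
    {q : ℝ} (hq : 0 ≤ q) (hsub : ∀ i, q * x i ≤ M.mulVec x i)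
    {i₁ : Fin n} (hstrict : q * x i₁ < M.mulVec x i₁) :
    q < radius M := by
  haveI : Nonempty (Fin n) := ⟨⟨0, hn⟩⟩
  obtain ⟨N, hN0, hN⟩ := hpos
  set w := (M ^ N).mulVec x with hw
  have hwpos : ∀ i, 0 < w i := by
    intro i
    rw [hw, mulVec_apply]
    refine lt_of_lt_of_le (mul_pos (hN i i₀) hx0)
      (Finset.single_le_sum (f := fun j => (M ^ N) i j * x j)
        (fun j _ => mul_nonneg (hN i j).le (hx j)) (Finset.mem_univ i₀))
  have hcomm : M.mulVec w = (M ^ N).mulVec (M.mulVec x) := by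
    rw [hw, Matrix.mulVec_mulVec, Matrix.mulVec_mulVec, ← pow_succ', ← pow_succ]
  have hMw : ∀ i, q * w i < M.mulVec w i := by
    intro i
    have h1 : M.mulVec w i - q * w i = ∑ j, (M ^ N) i j * (M.mulVec x j - q * x j) := by
      rw [hcomm, hw, mulVec_apply, mulVec_apply]
      rw [Finset.mul_sum, ← Finset.sum_sub_distrib]
      congr 1; ext j; ring
    have h2 : 0 < ∑ j, (M ^ N) i j * (M.mulVec x j - q * x j) := by
      refine lt_of_lt_of_le (mul_pos (hN i i₁) (by linarith [hstrict]))
        (Finset.single_le_sum (f := fun j => (M ^ N) i j * (M.mulVec x j - q * x j))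
          (fun j _ => mul_nonneg (hN i j).le (by linarith [hsub j])) (Finset.mem_univ i₁))
    linarith [h1 ▸ h2]
  set c := Finset.univ.inf' ⟨i₀, Finset.mem_univ i₀⟩ (fun i => M.mulVec w i / w i) with hc
  obtain ⟨i₂, -, hi₂⟩ := Finset.exists_mem_eq_inf' ⟨i₀, Finset.mem_univ i₀⟩
    (fun i => M.mulVec w i / w i)
  have hqc : q < c := by
    rw [hc, hi₂]
    exact (lt_div_iff₀ (hwpos i₂)).mpr (by linarith [hMw i₂])
  have hcsub : ∀ i, c * w i ≤ M.mulVec w i := by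
    intro i
    have h1 : c ≤ M.mulVec w i / w i := Finset.inf'_le _ (Finset.mem_univ i)
    exact (le_div_iff₀ (hwpos i)).mp h1
  exact lt_of_lt_of_le hqc
    (le_radius_of_subinvariant hn M hM hwpos (le_trans hq hqc.le) hcsub)

/-- Perron–Frobenius: existence of a positive eigenvector for the spectral radius. -/
lemma exists_perron (hn : 0 < n) (M : Matrix (Fin n) (Fin n) ℝ)
    (hM : ∀ i j, 0 ≤ M i j) (hpos : ∃ N, 0 < N ∧ ∀ i j, 0 < (M ^ N) i j) :
    ∃ x : Fin n → ℝ, (∀ i, 0 < x i) ∧ M.mulVec x = radius M • x ∧ 0 < radius M := by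
  obtain ⟨μ, hμ, habs⟩ := radius_mem hn M
  obtain ⟨v, hv0, hv⟩ := exists_eigenvector _ hμ
  set x : Fin n → ℝ := fun i => ‖v i‖ with hx
  have hxnn : ∀ i, 0 ≤ x i := fun i => norm_nonneg _
  obtain ⟨i₀, hi₀⟩ := Function.ne_iff.mp hv0
  have hxi₀ : 0 < x i₀ := by
    rw [hx]; simpa [norm_pos_iff] using hi₀
  have hq := radius_nonneg hn M
  have hsub : ∀ i, radius M * x i ≤ M.mulVec x i := by
    intro i
    have h1 : (M.map ((↑) : ℝ → ℂ)).mulVec v i = μ * v i := by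
      rw [hv]; simp
    have h2 : ∑ j, ((M i j : ℂ) * v j) = μ * v i := by
      simpa [Matrix.mulVec, dotProduct, Matrix.map_apply] using h1
    calc radius M * x i = ‖μ * v i‖ := by
          rw [norm_mul, habs]
      _ = ‖∑ j, ((M i j : ℂ) * v j)‖ := by rw [h2]
      _ ≤ ∑ j, ‖(M i j : ℂ) * v j‖ := by
          simpa using norm_sum_le Finset.univ (fun j => (M i j : ℂ) * v j)
      _ = ∑ j, M i j * x j := by
          congr 1; ext j
          rw [norm_mul, Complex.norm_real, Real.norm_eq_abs, abs_of_nonneg (hM i j)]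
      _ = M.mulVec x i := (mulVec_apply M x i).symm
  have heq : M.mulVec x = radius M • x := by
    by_contra h
    have : ∃ i₁, M.mulVec x i₁ ≠ radius M * x i₁ := by
      by_contra h2
      push_neg at h2
      exact h (funext fun i => by rw [Pi.smul_apply, smul_eq_mul, h2 i])
    obtain ⟨i₁, hi₁⟩ := this
    have hstrict : radius M * x i₁ < M.mulVec x i₁ := lt_of_le_of_ne (hsub i₁) (Ne.symm hi₁)
    exact absurd (lt_radius_of_strict hn M hM hpos hxnn hxi₀ hq hsub hstrict) (lt_irrefl _)
  obtain ⟨N, hN0, hN⟩ := hpos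
  have hiter : ∀ k, (M ^ k).mulVec x = radius M ^ k • x := by
    intro k
    induction k with
    | zero => simp [Matrix.one_mulVec]
    | succ k ih =>
      rw [pow_succ', ← Matrix.mulVec_mulVec, ih, Matrix.mulVec_smul, heq, pow_succ']
      rw [smul_smul, mul_comm]
  have hNx : ∀ i, 0 < ((M ^ N).mulVec x) i := by
    intro i
    rw [mulVec_apply]
    refine lt_of_lt_of_le (mul_pos (hN i i₀) hxi₀)
      (Finset.single_le_sum (f := fun j => (M ^ N) i j * x j)
        (fun j _ => mul_nonneg (hN i j).le (hxnn j)) (Finset.mem_univ i₀))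
  have hqpos : 0 < radius M := by
    rcases eq_or_lt_of_le hq with h | h
    · exfalso
      have := hNx i₀
      rw [hiter N] at this
      simp only [Pi.smul_apply, smul_eq_mul] at this
      rw [← h, zero_pow (by omega)] at this
      simp at this
    · exact h
  have hxpos : ∀ i, 0 < x i := by
    intro i
    have := hNx i
    rw [hiter N] at this
    simp only [Pi.smul_apply, smul_eq_mul] at this
    have hp : 0 < radius M ^ N := by positivity
    rcases mul_pos_iff.mp this with h | h
    · exact h.2
    · linarith [hp]
  exact ⟨x, hxpos, heq, hqpos⟩


/-! ### entries of `B` and `B'` -/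

section entries
variable {d : ℕ} (hd : 2 ≤ d) (hdn : d ≤ n - 1) (hn3 : 3 ≤ n)
include hd hdn hn3

lemma B_K {i j : Fin n} (h1 : (i:ℕ) < d) (h2 : (j:ℕ) < d) (h3 : (i:ℕ) ≠ (j:ℕ)) :
    B n d i j = 1 := by
  unfold B
  rw [if_pos ⟨fun h => h3 (by rw [h]), h1, h2⟩]

lemma B_Kdiag {i : Fin n} (h1 : (i:ℕ) < d) : B n d i i = 0 := by
  unfold B
  have hi := i.isLt
  rw [if_neg (by rintro ⟨h, -⟩; exact h rfl), if_neg (by omega), if_neg (by omega),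
    if_neg (by omega)]

lemma B_0d {i j : Fin n} (h1 : (i:ℕ) = 0) (h2 : (j:ℕ) = d) : B n d i j = 1 := by
  unfold B
  rw [if_neg (by omega), if_pos ⟨h1, h2⟩]

lemma B_out {i j : Fin n} (h1 : (i:ℕ) < d) (h2 : d ≤ (j:ℕ))
    (h3 : ¬((i:ℕ) = 0 ∧ (j:ℕ) = d)) : B n d i j = 0 := by
  unfold B
  have hj := j.isLt
  rw [if_neg (by omega), if_neg h3, if_neg (by omega), if_neg (by omega)]

lemma B_step {i j : Fin n} (h1 : d ≤ (i:ℕ)) (h2 : (j:ℕ) = (i:ℕ) + 1) :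
    B n d i j = 1 := by
  unfold B
  rw [if_neg (by omega), if_neg (by omega), if_pos ⟨h1, h2⟩]

lemma B_last1 {i j : Fin n} (h1 : (i:ℕ) = n - 1) (h2 : (j:ℕ) = 1) : B n d i j = 1 := by
  unfold B
  have hj := j.isLt
  rw [if_neg (by omega), if_neg (by omega), if_neg (by omega), if_pos ⟨h1, h2⟩]

lemma B_last0 {i j : Fin n} (h1 : (i:ℕ) = n - 1) (h2 : (j:ℕ) ≠ 1) : B n d i j = 0 := by
  unfold B
  have hj := j.isLt
  rw [if_neg (by omega), if_neg (by omega), if_neg (by omega), if_neg (by omega)]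

lemma B'_row {i j : Fin n} (h1 : (i:ℕ) ≠ n - 1) : B' n d i j = B n d i j := by
  unfold B'
  rw [if_neg (by omega), if_neg (by omega)]

lemma B'_last1 {i j : Fin n} (h1 : (i:ℕ) = n - 1) (h2 : (j:ℕ) = 0) : B' n d i j = 1 := by
  unfold B'
  rw [if_neg (by omega), if_pos ⟨h1, h2⟩]

lemma B'_last0 {i j : Fin n} (h1 : (i:ℕ) = n - 1) (h2 : (j:ℕ) ≠ 0) : B' n d i j = 0 := by
  unfold B'
  by_cases h3 : (j:ℕ) = 1
  · rw [if_pos ⟨h1, h3⟩]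
  · rw [if_neg (by omega), if_neg (by omega)]
    exact B_last0 hd hdn hn3 h1 h3

end entries

/-! ### strong connectivity -/

lemma sc_of_arcs {d : ℕ} (hd : 2 ≤ d) (hdn : d < n) (V : Fin n → Fin n → ℕ)
    (hK : ∀ i j : Fin n, (i:ℕ) < d → (j:ℕ) < d → (i:ℕ) ≠ (j:ℕ) → V i j ≠ 0)
    (h0d : ∀ i j : Fin n, (i:ℕ) = 0 → (j:ℕ) = d → V i j ≠ 0)
    (hstep : ∀ i j : Fin n, d ≤ (i:ℕ) → (j:ℕ) = (i:ℕ) + 1 → V i j ≠ 0)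
    {t : Fin n} (ht : (t:ℕ) < d)
    (hlast : ∀ i : Fin n, (i:ℕ) = n - 1 → V i t ≠ 0) :
    StronglyConnected V := by
  have hn : 0 < n := by omega
  set R := fun a b : Fin n => V a b ≠ 0 with hR
  have climb : ∀ k (i : Fin n), (i:ℕ) + k = n - 1 → d ≤ (i:ℕ) →
      Relation.ReflTransGen R i ⟨n-1, by omega⟩ := by
    intro k
    induction k with
    | zero =>
      intro i h1 h2
      have : i = ⟨n-1, by omega⟩ := Fin.ext (by simpa using h1)
      rw [this]
    | succ k ih =>
      intro i h1 h2
      have hilt := i.isLt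
      have hi1 : (i:ℕ) + 1 < n := by omega
      exact Relation.ReflTransGen.head (hstep i ⟨(i:ℕ)+1, hi1⟩ h2 rfl)
        (ih ⟨(i:ℕ)+1, hi1⟩ (by simp; omega) (by simp; omega))
  have down : ∀ k (j : Fin n), d + k = (j:ℕ) → Relation.ReflTransGen R ⟨d, hdn⟩ j := by
    intro k
    induction k with
    | zero =>
      intro j h1
      have : j = ⟨d, hdn⟩ := Fin.ext (by simp; omega)
      rw [this]
    | succ k ih =>
      intro j h1
      have hjlt := j.isLt
      have hj : d + k < n := by omega
      exact Relation.ReflTransGen.tail (ih ⟨d+k, hj⟩ (by simp))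
        (hstep ⟨d+k, hj⟩ j (by simp) (by simp; omega))
  have from0 : ∀ j, Relation.ReflTransGen R ⟨0, hn⟩ j := by
    intro j
    by_cases hj : (j:ℕ) < d
    · by_cases hj0 : (j:ℕ) = 0
      · have : j = ⟨0, hn⟩ := Fin.ext (by simpa using hj0.symm ▸ rfl)
        rw [this]
      · exact Relation.ReflTransGen.single (hK _ j (by simp; omega) hj (by simp; omega))
    · exact Relation.ReflTransGen.head (h0d ⟨0, hn⟩ ⟨d, hdn⟩ rfl rfl)
        (down ((j:ℕ) - d) j (by omega))
  have reach0 : ∀ i, Relation.ReflTransGen R i ⟨0, hn⟩ := by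
    intro i
    have hilt := i.isLt
    by_cases hi : (i:ℕ) < d
    · by_cases hi0 : (i:ℕ) = 0
      · have : i = ⟨0, hn⟩ := Fin.ext (by simpa using hi0)
        rw [this]
      · exact Relation.ReflTransGen.single (hK i _ hi (by simp; omega) (by simp; omega))
    · have h1 : Relation.ReflTransGen R i ⟨n-1, by omega⟩ :=
        climb (n-1-(i:ℕ)) i (by omega) (by omega)
      have h2 : Relation.ReflTransGen R (⟨n-1, by omega⟩ : Fin n) t :=
        Relation.ReflTransGen.single (hlast _ (by simp))
      have h3 : Relation.ReflTransGen R t ⟨0, hn⟩ := by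
        by_cases ht0 : (t:ℕ) = 0
        · have : t = ⟨0, hn⟩ := Fin.ext (by simpa using ht0)
          rw [this]
        · exact Relation.ReflTransGen.single (hK t _ ht (by simp; omega) (by simp; omega))
      exact (h1.trans h2).trans h3
  exact fun i j => (reach0 i).trans (from0 j)

lemma sc_B {d : ℕ} (hd : 2 ≤ d) (hdn : d ≤ n - 1) (hn3 : 3 ≤ n) :
    StronglyConnected (B n d) := by
  have h1 : (1 : ℕ) < n := by omega
  refine sc_of_arcs hd (by omega) _ (fun i j a b c => by rw [B_K hd hdn hn3 a b c]; omega)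
    (fun i j a b => by rw [B_0d hd hdn hn3 a b]; omega)
    (fun i j a b => by rw [B_step hd hdn hn3 a b]; omega)
    (t := ⟨1, h1⟩) (by simp; omega)
    (fun i a => by rw [B_last1 hd hdn hn3 a (by simp)]; omega)

lemma sc_B' {d : ℕ} (hd : 2 ≤ d) (hdn : d ≤ n - 1) (hn3 : 3 ≤ n) :
    StronglyConnected (B' n d) := by
  have h0 : (0 : ℕ) < n := by omega
  have hB'step : ∀ i j : Fin n, d ≤ (i:ℕ) → (j:ℕ) = (i:ℕ) + 1 → B' n d i j ≠ 0 := by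
    intro i j a b
    have hjlt := j.isLt
    rw [B'_row hd hdn hn3 (by omega), B_step hd hdn hn3 a b]; omega
  refine sc_of_arcs hd (by omega) _
    (fun i j a b c => by rw [B'_row hd hdn hn3 (by omega), B_K hd hdn hn3 a b c]; omega)
    (fun i j a b => by rw [B'_row hd hdn hn3 (by omega), B_0d hd hdn hn3 a b]; omega)
    hB'step
    (t := ⟨0, h0⟩) (by simp; omega)
    (fun i a => by rw [B'_last1 hd hdn hn3 a (by simp)]; omega)

/-! ### sums supported on few points -/

lemma sum_three {f : Fin n → ℝ} {a b c : Fin n} (hab : a ≠ b) (hac : a ≠ c) (hbc : b ≠ c)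
    (h : ∀ j, j ≠ a → j ≠ b → j ≠ c → f j = 0) : ∑ j, f j = f a + f b + f c := by
  have key : ∑ j ∈ ({a, b, c} : Finset (Fin n)), f j = ∑ j, f j := by
    refine Finset.sum_subset (Finset.subset_univ _) fun j _ hj => ?_
    simp only [Finset.mem_insert, Finset.mem_singleton, not_or] at hj
    exact h j hj.1 hj.2.1 hj.2.2
  rw [← key, Finset.sum_insert (by simp [hab, hac]), Finset.sum_insert (by simp [hbc]),
    Finset.sum_singleton, add_assoc]

lemma sum_two {f : Fin n → ℝ} {a b : Fin n} (hab : a ≠ b)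
    (h : ∀ j, j ≠ a → j ≠ b → f j = 0) : ∑ j, f j = f a + f b := by
  have key : ∑ j ∈ ({a, b} : Finset (Fin n)), f j = ∑ j, f j := by
    refine Finset.sum_subset (Finset.subset_univ _) fun j _ hj => ?_
    simp only [Finset.mem_insert, Finset.mem_singleton, not_or] at hj
    exact h j hj.1 hj.2
  rw [← key, Finset.sum_insert (by simp [hab]), Finset.sum_singleton]

/-! ### Q matrix basics -/

lemma Qmat_apply (W : Fin n → Fin n → ℕ) (i j : Fin n) :
    Qmat W i j = (if i = j then (outdeg W i : ℝ) else 0) + (W i j : ℝ) := by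
  simp [Qmat, Matrix.add_apply, Matrix.diagonal_apply, adjMat]

lemma Qmat_nonneg (W : Fin n → Fin n → ℕ) (i j : Fin n) : 0 ≤ Qmat W i j := by
  rw [Qmat_apply]; positivity

lemma Qmat_diag_pos (W : Fin n → Fin n → ℕ) {i : Fin n} (h : 0 < outdeg W i) :
    0 < Qmat W i i := by
  rw [Qmat_apply, if_pos rfl]
  have : (1:ℝ) ≤ (outdeg W i : ℝ) := by exact_mod_cast h
  positivity

lemma Qmat_pow_pos (W : Fin n → Fin n → ℕ) (hdeg : ∀ i, 0 < outdeg W i)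
    (hsc : StronglyConnected W) : ∃ N, 0 < N ∧ ∀ i j, 0 < ((Qmat W) ^ N) i j := by
  refine exists_pow_pos (Qmat_nonneg W) (fun i => Qmat_diag_pos W (hdeg i)) (fun i j => ?_)
  refine Relation.ReflTransGen.mono (fun a b hab => ?_) i j (hsc i j)
  have h1 : (1:ℝ) ≤ (W a b : ℝ) := by exact_mod_cast Nat.one_le_iff_ne_zero.mpr hab
  rw [Qmat_apply]
  have : (0:ℝ) ≤ (if a = b then (outdeg W a : ℝ) else 0) := by positivity
  intro hc
  nlinarith

lemma outdeg_B_pos {d : ℕ} (hd : 2 ≤ d) (hdn : d ≤ n - 1) (hn3 : 3 ≤ n) (i : Fin n) :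
    0 < outdeg (B n d) i := by
  have hilt := i.isLt
  have key : ∃ j : Fin n, B n d i j = 1 := by
    by_cases hi : (i:ℕ) < d
    · by_cases hi0 : (i:ℕ) = 0
      · exact ⟨⟨1, by omega⟩, B_K hd hdn hn3 hi (by simp; omega) (by simp; omega)⟩
      · exact ⟨⟨0, by omega⟩, B_K hd hdn hn3 hi (by simp; omega) (by simp; omega)⟩
    · by_cases hil : (i:ℕ) = n - 1
      · exact ⟨⟨1, by omega⟩, B_last1 hd hdn hn3 hil (by simp)⟩
      · exact ⟨⟨(i:ℕ)+1, by omega⟩, B_step hd hdn hn3 (by omega) (by simp)⟩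
  obtain ⟨j, hj⟩ := key
  have h2 : B n d i j ≤ ∑ x, B n d i x := Finset.single_le_sum
    (f := fun j => B n d i j) (fun _ _ => Nat.zero_le _) (Finset.mem_univ j)
  rw [outdeg]; omega

lemma outdeg_B'_pos {d : ℕ} (hd : 2 ≤ d) (hdn : d ≤ n - 1) (hn3 : 3 ≤ n) (i : Fin n) :
    0 < outdeg (B' n d) i := by
  have hilt := i.isLt
  have key : ∃ j : Fin n, B' n d i j = 1 := by
    by_cases hil : (i:ℕ) = n - 1
    · exact ⟨⟨0, by omega⟩, B'_last1 hd hdn hn3 hil (by simp)⟩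
    · by_cases hi : (i:ℕ) < d
      · by_cases hi0 : (i:ℕ) = 0
        · exact ⟨⟨1, by omega⟩, by
            rw [B'_row hd hdn hn3 (by omega)]
            exact B_K hd hdn hn3 hi (by simp; omega) (by simp; omega)⟩
        · exact ⟨⟨0, by omega⟩, by
            rw [B'_row hd hdn hn3 (by omega)]
            exact B_K hd hdn hn3 hi (by simp; omega) (by simp; omega)⟩
      · exact ⟨⟨(i:ℕ)+1, by omega⟩, by
          rw [B'_row hd hdn hn3 (by omega)]
          exact B_step hd hdn hn3 (by omega) (by simp)⟩
  obtain ⟨j, hj⟩ := key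
  have h2 : B' n d i j ≤ ∑ x, B' n d i x := Finset.single_le_sum
    (f := fun j => B' n d i j) (fun _ _ => Nat.zero_le _) (Finset.mem_univ j)
  rw [outdeg]; omega


end Aux

set_option maxHeartbeats 2000000 in
/-- For `2 ≤ d ≤ n-1`, `q(B'_{n,d}) > q(B_{n,d})`. -/
theorem q_B_lt_q_B' {n d : ℕ} (hd : 2 ≤ d) (hdn : d ≤ n - 1) :
    q (B n d) < q (B' n d) := by
  have hn3 : 3 ≤ n := by omega
  have hn : 0 < n := by omega
  unfold q
  have hQpow := Qmat_pow_pos (B n d) (outdeg_B_pos hd hdn hn3) (sc_B hd hdn hn3)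
  have hQ'pow := Qmat_pow_pos (B' n d) (outdeg_B'_pos hd hdn hn3) (sc_B' hd hdn hn3)
  obtain ⟨x, hx, heq, hq0⟩ := exists_perron hn (Qmat (B n d)) (Qmat_nonneg _) hQpow
  set qq := radius (Qmat (B n d)) with hqq
  have hrow : ∀ i, ∑ j, Qmat (B n d) i j * x j = qq * x i := by
    intro i
    have h1 := congrFun heq i
    rw [mulVec_apply] at h1
    simpa using h1
  set F0 : Fin n := ⟨0, by omega⟩ with hF0
  set F1 : Fin n := ⟨1, by omega⟩ with hF1
  set Fd : Fin n := ⟨d, by omega⟩ with hFd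
  set Fl : Fin n := ⟨n-1, by omega⟩ with hFl
  have hF0v : (F0:ℕ) = 0 := rfl
  have hF1v : (F1:ℕ) = 1 := rfl
  have hFdv : (Fd:ℕ) = d := rfl
  have hFlv : (Fl:ℕ) = n - 1 := rfl
  have h01 : F0 ≠ F1 := Fin.ne_of_val_ne (by omega)
  have h10 : F1 ≠ F0 := Fin.ne_of_val_ne (by omega)
  have h0d : F0 ≠ Fd := Fin.ne_of_val_ne (by omega)
  have h1d : F1 ≠ Fd := Fin.ne_of_val_ne (by omega)
  have hl0 : Fl ≠ F0 := Fin.ne_of_val_ne (by omega)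
  have hl1 : Fl ≠ F1 := Fin.ne_of_val_ne (by omega)
  obtain ⟨D1, hD1⟩ : ∃ D1 : ℝ, (outdeg (B n d) F1 : ℝ) = D1 := ⟨_, rfl⟩
  -- outdegree relation
  have hsum1 : ∑ j, ((B n d F0 j : ℝ) - (B n d F1 j : ℝ)) = 1 := by
    rw [sum_three h01 h0d h1d ?_]
    · rw [B_Kdiag hd hdn hn3 (by omega), B_K hd hdn hn3 (by omega) (by omega) (by omega),
        B_K hd hdn hn3 (by omega) (by omega) (by omega), B_Kdiag hd hdn hn3 (by omega),
        B_0d hd hdn hn3 rfl rfl, B_out hd hdn hn3 (by omega) (by omega) (by omega)]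
      norm_num
    · intro j hj0 hj1 hjd
      have v0 : (j:ℕ) ≠ 0 := fun hc => hj0 (Fin.ext (by omega))
      have v1 : (j:ℕ) ≠ 1 := fun hc => hj1 (Fin.ext (by omega))
      have vd : (j:ℕ) ≠ d := fun hc => hjd (Fin.ext (by omega))
      by_cases hlt : (j:ℕ) < d
      · rw [B_K hd hdn hn3 (by omega) hlt (by omega), B_K hd hdn hn3 (by omega) hlt (by omega)]
        ring
      · rw [B_out hd hdn hn3 (by omega) (by omega) (by omega),
          B_out hd hdn hn3 (by omega) (by omega) (by omega)]
        ring
  have houtd : (outdeg (B n d) F0 : ℝ) = D1 + 1 := by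
    have e : (outdeg (B n d) F0 : ℝ) - (outdeg (B n d) F1 : ℝ) = 1 := by
      rw [outdeg, outdeg]
      push_cast
      rw [← Finset.sum_sub_distrib]
      exact hsum1
    rw [hD1] at e; linarith
  -- Q entries
  have hQ00 : Qmat (B n d) F0 F0 = D1 + 1 := by
    rw [Qmat_apply, if_pos rfl, B_Kdiag hd hdn hn3 (by omega), houtd]; norm_num
  have hQ01 : Qmat (B n d) F0 F1 = 1 := by
    rw [Qmat_apply, if_neg h01, B_K hd hdn hn3 (by omega) (by omega) (by omega)]; norm_num
  have hQ0d : Qmat (B n d) F0 Fd = 1 := by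
    rw [Qmat_apply, if_neg h0d, B_0d hd hdn hn3 rfl rfl]; norm_num
  have hQ10 : Qmat (B n d) F1 F0 = 1 := by
    rw [Qmat_apply, if_neg h10, B_K hd hdn hn3 (by omega) (by omega) (by omega)]; norm_num
  have hQ11 : Qmat (B n d) F1 F1 = D1 := by
    rw [Qmat_apply, if_pos rfl, B_Kdiag hd hdn hn3 (by omega), hD1]; norm_num
  have hQ1d : Qmat (B n d) F1 Fd = 0 := by
    rw [Qmat_apply, if_neg h1d, B_out hd hdn hn3 (by omega) (by omega) (by omega)]; norm_num
  -- qq > D1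
  have hqD1 : D1 < qq := by
    have hterm : ∑ j ∈ ({F1, F0} : Finset (Fin n)), Qmat (B n d) F1 j * x j
        = D1 * x F1 + 1 * x F0 := by
      rw [Finset.sum_insert (by simp [h10]), Finset.sum_singleton, hQ11, hQ10]
    have hle : ∑ j ∈ ({F1, F0} : Finset (Fin n)), Qmat (B n d) F1 j * x j
        ≤ ∑ j, Qmat (B n d) F1 j * x j :=
      Finset.sum_le_sum_of_subset_of_nonneg (Finset.subset_univ _)
        (fun j _ _ => mul_nonneg (Qmat_nonneg _ _ _) (hx j).le)
    have hr1 := hrow F1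
    by_contra hcon
    push_neg at hcon
    have : qq * x F1 ≤ D1 * x F1 := mul_le_mul_of_nonneg_right hcon (hx F1).le
    nlinarith [hx F0]
  -- x F1 < x F0
  have hx01 : x F1 < x F0 := by
    have hdiff : ∑ j, (Qmat (B n d) F0 j - Qmat (B n d) F1 j) * x j
        = qq * x F0 - qq * x F1 := by
      rw [← hrow F0, ← hrow F1, ← Finset.sum_sub_distrib]
      congr 1; ext j; ring
    have hval : ∑ j, (Qmat (B n d) F0 j - Qmat (B n d) F1 j) * x j
        = D1 * x F0 + (1 - D1) * x F1 + 1 * x Fd := by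
      rw [sum_three h01 h0d h1d ?_]
      · rw [hQ00, hQ01, hQ0d, hQ10, hQ11, hQ1d]; ring
      · intro j hj0 hj1 hjd
        have v0 : (j:ℕ) ≠ 0 := fun hc => hj0 (Fin.ext (by omega))
        have v1 : (j:ℕ) ≠ 1 := fun hc => hj1 (Fin.ext (by omega))
        have vd : (j:ℕ) ≠ d := fun hc => hjd (Fin.ext (by omega))
        have hB : (B n d F0 j : ℝ) = (B n d F1 j : ℝ) := by
          by_cases hlt : (j:ℕ) < d
          · rw [B_K hd hdn hn3 (by omega) hlt (by omega),
              B_K hd hdn hn3 (by omega) hlt (by omega)]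
          · rw [B_out hd hdn hn3 (by omega) (by omega) (by omega),
              B_out hd hdn hn3 (by omega) (by omega) (by omega)]
        rw [Qmat_apply, Qmat_apply, if_neg (fun hc => hj0 hc.symm),
          if_neg (fun hc => hj1 hc.symm), hB]
        ring
    have hkey : (qq - D1) * (x F0 - x F1) = x F1 + x Fd := by
      linear_combination hval - hdiff
    by_contra hcon
    push_neg at hcon
    have h1 : (qq - D1) * (x F0 - x F1) ≤ 0 :=
      mul_nonpos_of_nonneg_of_nonpos (by linarith) (by linarith)
    linarith [hx F1, hx Fd]
  -- rows of Q(B') agree with Q(B) off the last row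
  have houtrow : ∀ i : Fin n, (i:ℕ) ≠ n - 1 → outdeg (B' n d) i = outdeg (B n d) i := by
    intro i hi
    rw [outdeg, outdeg]
    exact Finset.sum_congr rfl fun j _ => B'_row hd hdn hn3 hi
  have houtl : outdeg (B' n d) Fl = outdeg (B n d) Fl := by
    have e1 : outdeg (B n d) Fl = 1 := by
      rw [outdeg]
      have hh : ∀ j : Fin n, B n d Fl j = if j = F1 then 1 else 0 := by
        intro j
        by_cases h : j = F1
        · rw [if_pos h, h, B_last1 hd hdn hn3 rfl rfl]
        · rw [if_neg h, B_last0 hd hdn hn3 rfl (fun hc => h (Fin.ext (by omega)))]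
      simp [hh]
    have e2 : outdeg (B' n d) Fl = 1 := by
      rw [outdeg]
      have hh : ∀ j : Fin n, B' n d Fl j = if j = F0 then 1 else 0 := by
        intro j
        by_cases h : j = F0
        · rw [if_pos h, h, B'_last1 hd hdn hn3 rfl rfl]
        · rw [if_neg h, B'_last0 hd hdn hn3 rfl (fun hc => h (Fin.ext (by omega)))]
      simp [hh]
    rw [e1, e2]
  have hsubs : ∀ i, i ≠ Fl → (Qmat (B' n d)).mulVec x i = qq * x i := by
    intro i hi
    have hiv : (i:ℕ) ≠ n - 1 := fun hc => hi (Fin.ext (by omega))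
    rw [mulVec_apply, ← hrow i]
    refine Finset.sum_congr rfl fun j _ => ?_
    rw [Qmat_apply, Qmat_apply, B'_row hd hdn hn3 hiv, houtrow i hiv]
  have hd2 : ∑ j, (Qmat (B' n d) Fl j - Qmat (B n d) Fl j) * x j = x F0 - x F1 := by
    rw [sum_two h01 ?_]
    · have hQ'l0 : Qmat (B' n d) Fl F0 = 1 := by
        rw [Qmat_apply, if_neg hl0, B'_last1 hd hdn hn3 rfl rfl]; norm_num
      have hQl0 : Qmat (B n d) Fl F0 = 0 := by
        rw [Qmat_apply, if_neg hl0, B_last0 hd hdn hn3 rfl (by omega)]; norm_num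
      have hQ'l1 : Qmat (B' n d) Fl F1 = 0 := by
        rw [Qmat_apply, if_neg hl1, B'_last0 hd hdn hn3 rfl (by omega)]; norm_num
      have hQl1 : Qmat (B n d) Fl F1 = 1 := by
        rw [Qmat_apply, if_neg hl1, B_last1 hd hdn hn3 rfl rfl]; norm_num
      rw [hQ'l0, hQl0, hQ'l1, hQl1]; ring
    · intro j hj0 hj1
      have v0 : (j:ℕ) ≠ 0 := fun hc => hj0 (Fin.ext (by omega))
      have v1 : (j:ℕ) ≠ 1 := fun hc => hj1 (Fin.ext (by omega))
      have hB' : (B' n d Fl j : ℝ) = 0 := by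
        rw [B'_last0 hd hdn hn3 rfl (by omega)]; norm_num
      have hB : (B n d Fl j : ℝ) = 0 := by
        rw [B_last0 hd hdn hn3 rfl (by omega)]; norm_num
      by_cases hjl : j = Fl
      · rw [hjl] at hB' hB ⊢
        rw [Qmat_apply, Qmat_apply, if_pos rfl, if_pos rfl, hB', hB, houtl]
        ring
      · rw [Qmat_apply, Qmat_apply, if_neg (fun hc => hjl hc.symm),
          if_neg (fun hc => hjl hc.symm), hB', hB]
        ring
  have hstr : (Qmat (B' n d)).mulVec x Fl = qq * x Fl + (x F0 - x F1) := by
    calc (Qmat (B' n d)).mulVec x Fl = ∑ j, Qmat (B' n d) Fl j * x j := mulVec_apply _ _ _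
      _ = ∑ j, (Qmat (B n d) Fl j * x j + (Qmat (B' n d) Fl j - Qmat (B n d) Fl j) * x j) := by
          congr 1; ext j; ring
      _ = qq * x Fl + (x F0 - x F1) := by rw [Finset.sum_add_distrib, hrow Fl, hd2]
  have hsub_all : ∀ i, qq * x i ≤ (Qmat (B' n d)).mulVec x i := by
    intro i
    by_cases hi : i = Fl
    · rw [hi, hstr]; linarith
    · rw [hsubs i hi]
  have hstrict : qq * x Fl < (Qmat (B' n d)).mulVec x Fl := by
    rw [hstr]; linarith
  exact lt_radius_of_strict hn (Qmat (B' n d)) (Qmat_nonneg _) hQ'pow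
    (fun i => (hx i).le) (hx F0) hq0.le hsub_all hstrict


end SignlessDigraph
end

section
/- Let 2 ≤ d ≤ n−1. Then 2d−2 < q(B_{n,d}) ≤ (3d−3+sqrt((d−1)^2+8))/2. -/
open Matrix

namespace SignlessDigraph

variable {n : ℕ}

open Filter
open scoped NNReal ENNReal

set_option maxHeartbeats 1000000

attribute [local instance] Matrix.linftyOpNormedAddCommGroup Matrix.linftyOpNormedRing
  Matrix.linftyOpNormedAlgebra

/-- helper : row sums of `Qmat` against a weight function. -/
lemma aux_Qrow {n : ℕ} (W : Fin n → Fin n → ℕ) (f : ℕ → ℝ) (i : Fin n) :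
    ∑ j, Qmat W i j * f (j : ℕ)
      = (outdeg W i : ℝ) * f (i : ℕ) + ∑ j, (W i j : ℝ) * f (j : ℕ) := by
  unfold Qmat
  simp only [Matrix.add_apply, Matrix.diagonal_apply]
  simp only [adjMat]
  rw [show (∑ j, ((if i = j then ((outdeg W i : ℝ)) else 0) + (W i j : ℝ)) * f (j : ℕ))
      = (∑ j, (if i = j then ((outdeg W i : ℝ)) else 0) * f (j : ℕ))
        + ∑ j, (W i j : ℝ) * f (j : ℕ) by
    rw [← Finset.sum_add_distrib]; exact Finset.sum_congr rfl fun j _ => by ring]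
  congr 1
  rw [Finset.sum_eq_single i (fun j _ hji => by rw [if_neg (fun h => hji h.symm), zero_mul])
    (fun h => absurd (Finset.mem_univ i) h)]
  rw [if_pos rfl]

/-- Qmat of B has nonnegative entries. -/
lemma aux_Qnonneg {n d : ℕ} : ∀ i j, 0 ≤ Qmat (B n d) i j := by
  intro i j
  unfold Qmat
  rw [Matrix.add_apply]
  simp only [adjMat]
  apply add_nonneg
  · rw [Matrix.diagonal_apply]; split <;> positivity
  · positivity

lemma aux_B_row {n d : ℕ} (hd : 2 ≤ d) (hdn : d + 1 ≤ n) (f : ℕ → ℝ) (i : Fin n) :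
    ∑ j, (B n d i j : ℝ) * f (j : ℕ) =
      if (i : ℕ) = 0 then (∑ b ∈ Finset.Ico 1 d, f b) + f d
      else if (i : ℕ) < d then (∑ b ∈ Finset.range d, f b) - f (i : ℕ)
      else if (i : ℕ) < n - 1 then f ((i : ℕ) + 1)
      else f 1 := by
  have hstep : ∑ j, (B n d i j : ℝ) * f (j : ℕ) =
      ∑ b ∈ Finset.range n,
        (if (i : ℕ) ≠ b ∧ (i : ℕ) < d ∧ b < d then (1 : ℝ)
          else if (i : ℕ) = 0 ∧ b = d then 1
          else if d ≤ (i : ℕ) ∧ b = (i : ℕ) + 1 then 1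
          else if (i : ℕ) = n - 1 ∧ b = 1 then 1
          else 0) * f b := by
    rw [← Fin.sum_univ_eq_sum_range]
    refine Finset.sum_congr rfl fun j _ => ?_
    unfold B
    push_cast
    congr 1
    simp [ne_eq, Fin.ext_iff]
  rw [hstep]
  have hin := i.isLt
  rcases Nat.lt_or_ge (i : ℕ) d with hid | hid
  · rcases Nat.eq_zero_or_pos (i : ℕ) with hi0 | hi0
    · rw [if_pos hi0]
      have hpt : ∀ b ∈ Finset.range n,
          (if (i : ℕ) ≠ b ∧ (i : ℕ) < d ∧ b < d then (1 : ℝ)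
            else if (i : ℕ) = 0 ∧ b = d then 1
            else if d ≤ (i : ℕ) ∧ b = (i : ℕ) + 1 then 1
            else if (i : ℕ) = n - 1 ∧ b = 1 then 1
            else 0) * f b
          = (if 1 ≤ b ∧ b < d then f b else 0) + (if b = d then f b else 0) := by
        intro b hb
        rw [Finset.mem_range] at hb
        split_ifs <;> first | (exfalso; omega) | ring
      rw [Finset.sum_congr rfl hpt, Finset.sum_add_distrib]
      congr 1
      · rw [← Finset.sum_subset (s₁ := Finset.Ico 1 d)
          (fun b hb => Finset.mem_range.mpr (by rw [Finset.mem_Ico] at hb; omega))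
          (fun b hb hnb => by rw [if_neg (by rw [Finset.mem_Ico] at hnb; exact hnb)])]
        exact Finset.sum_congr rfl fun b hb => if_pos (Finset.mem_Ico.mp hb)
      · rw [Finset.sum_ite_eq' (Finset.range n) d f, if_pos (Finset.mem_range.mpr (by omega))]
    · rw [if_neg (by omega), if_pos hid]
      have hpt : ∀ b ∈ Finset.range n,
          (if (i : ℕ) ≠ b ∧ (i : ℕ) < d ∧ b < d then (1 : ℝ)
            else if (i : ℕ) = 0 ∧ b = d then 1
            else if d ≤ (i : ℕ) ∧ b = (i : ℕ) + 1 then 1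
            else if (i : ℕ) = n - 1 ∧ b = 1 then 1
            else 0) * f b
          = (if b < d then f b else 0) - (if b = (i : ℕ) then f b else 0) := by
        intro b hb
        rw [Finset.mem_range] at hb
        split_ifs <;> first | (exfalso; omega) | ring
      rw [Finset.sum_congr rfl hpt, Finset.sum_sub_distrib]
      congr 1
      · rw [← Finset.sum_subset (s₁ := Finset.range d)
          (fun b hb => Finset.mem_range.mpr (by rw [Finset.mem_range] at hb; omega))
          (fun b hb hnb => by rw [if_neg (by rwa [Finset.mem_range] at hnb)])]
        exact Finset.sum_congr rfl fun b hb => if_pos (Finset.mem_range.mp hb)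
      · rw [Finset.sum_ite_eq' (Finset.range n) (i : ℕ) f,
          if_pos (Finset.mem_range.mpr (by omega))]
  · rcases Nat.lt_or_ge (i : ℕ) (n - 1) with hilt | hige
    · rw [if_neg (by omega), if_neg (by omega), if_pos hilt]
      have hpt : ∀ b ∈ Finset.range n,
          (if (i : ℕ) ≠ b ∧ (i : ℕ) < d ∧ b < d then (1 : ℝ)
            else if (i : ℕ) = 0 ∧ b = d then 1
            else if d ≤ (i : ℕ) ∧ b = (i : ℕ) + 1 then 1
            else if (i : ℕ) = n - 1 ∧ b = 1 then 1
            else 0) * f b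
          = (if b = (i : ℕ) + 1 then f b else 0) := by
        intro b hb
        rw [Finset.mem_range] at hb
        split_ifs <;> first | (exfalso; omega) | ring
      rw [Finset.sum_congr rfl hpt, Finset.sum_ite_eq' (Finset.range n) ((i : ℕ) + 1) f,
        if_pos (Finset.mem_range.mpr (by omega))]
    · rw [if_neg (by omega), if_neg (by omega), if_neg (by omega)]
      have hpt : ∀ b ∈ Finset.range n,
          (if (i : ℕ) ≠ b ∧ (i : ℕ) < d ∧ b < d then (1 : ℝ)
            else if (i : ℕ) = 0 ∧ b = d then 1
            else if d ≤ (i : ℕ) ∧ b = (i : ℕ) + 1 then 1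
            else if (i : ℕ) = n - 1 ∧ b = 1 then 1
            else 0) * f b
          = (if b = 1 then f b else 0) := by
        intro b hb
        rw [Finset.mem_range] at hb
        split_ifs <;> first | (exfalso; omega) | ring
      rw [Finset.sum_congr rfl hpt, Finset.sum_ite_eq' (Finset.range n) 1 f,
        if_pos (Finset.mem_range.mpr (by omega))]

/-- outdegrees of B -/
lemma aux_B_outdeg {n d : ℕ} (hd : 2 ≤ d) (hdn : d + 1 ≤ n) (i : Fin n) :
    (outdeg (B n d) i : ℝ) =
      if (i : ℕ) = 0 then (d : ℝ)
      else if (i : ℕ) < d then (d : ℝ) - 1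
      else 1 := by
  have h1 : (outdeg (B n d) i : ℝ) = ∑ j, (B n d i j : ℝ) * (fun _ : ℕ => (1 : ℝ)) (j : ℕ) := by
    unfold outdeg
    push_cast
    simp
  rw [h1, aux_B_row hd hdn (fun _ => (1 : ℝ)) i]
  have hin := i.isLt
  split_ifs <;>
    first
      | (exfalso; omega)
      | rfl
      | (simp only [Finset.sum_const, Nat.card_Ico, Finset.card_range, nsmul_eq_mul,
           mul_one] <;>
         push_cast [Nat.cast_sub (show 1 ≤ d by omega)] <;> ring)



lemma aux_eig_exists {n : ℕ} (M : Matrix (Fin n) (Fin n) ℝ) (μ : ℂ)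
    (hμ : μ ∈ spectrum ℂ (M.map ((↑) : ℝ → ℂ))) :
    ∃ v : Fin n → ℂ, v ≠ 0 ∧ (M.map ((↑) : ℝ → ℂ)) *ᵥ v = μ • v := by
  rw [spectrum.mem_iff] at hμ
  set Mc := M.map ((↑) : ℝ → ℂ) with hMc
  have hdet : (algebraMap ℂ (Matrix (Fin n) (Fin n) ℂ) μ - Mc).det = 0 := by
    by_contra h
    exact hμ ((Matrix.isUnit_iff_isUnit_det _).mpr (isUnit_iff_ne_zero.mpr h))
  obtain ⟨v, hv0, hv⟩ := Matrix.exists_mulVec_eq_zero_iff.mpr hdet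
  refine ⟨v, hv0, ?_⟩
  have h2 : (algebraMap ℂ (Matrix (Fin n) (Fin n) ℂ) μ - Mc) *ᵥ v
      = μ • v - Mc *ᵥ v := by
    rw [Matrix.sub_mulVec, Algebra.algebraMap_eq_smul_one, Matrix.smul_mulVec,
      Matrix.one_mulVec]
  rw [h2, sub_eq_zero] at hv
  exact hv.symm

lemma aux_eig_bound {n : ℕ} (M : Matrix (Fin n) (Fin n) ℝ) (hM : ∀ i j, 0 ≤ M i j)
    (w : Fin n → ℝ) (hw : ∀ i, 0 < w i) (R : ℝ)
    (hrow : ∀ i, ∑ j, M i j * w j ≤ R * w i) (μ : ℂ)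
    (hμ : μ ∈ spectrum ℂ (M.map ((↑) : ℝ → ℂ))) : ‖μ‖ ≤ R := by
  obtain ⟨v, hv0, hv⟩ := aux_eig_exists M μ hμ
  obtain ⟨j0, hj0⟩ := Function.ne_iff.mp hv0
  have hne : Nonempty (Fin n) := ⟨j0⟩
  obtain ⟨i, -, hi⟩ := Finset.exists_max_image Finset.univ (fun j => ‖v j‖ / w j)
    ⟨j0, Finset.mem_univ j0⟩
  have hvi : 0 < ‖v i‖ := by
    have h1 : 0 < ‖v j0‖ / w j0 := div_pos (norm_pos_iff.mpr hj0) (hw j0)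
    have h3 : 0 < ‖v i‖ / w i := h1.trans_le (hi j0 (Finset.mem_univ j0))
    rcases div_pos_iff.mp h3 with h | h
    · exact h.1
    · exact absurd (hw i) (not_lt.mpr h.2.le)
  have hkey : ∀ j, ‖v j‖ * w i ≤ ‖v i‖ * w j := fun j =>
    (div_le_div_iff₀ (hw j) (hw i)).mp (hi j (Finset.mem_univ j))
  have h5 : ‖μ‖ * ‖v i‖ = ‖((M.map ((↑) : ℝ → ℂ)) *ᵥ v) i‖ := by
    rw [hv]
    simp [norm_smul]
  have h6 : ‖((M.map ((↑) : ℝ → ℂ)) *ᵥ v) i‖ ≤ ∑ j, M i j * ‖v j‖ := by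
    simp only [Matrix.mulVec, dotProduct]
    refine (norm_sum_le _ _).trans_eq (Finset.sum_congr rfl fun j _ => ?_)
    simp [Matrix.map_apply, norm_smul, abs_of_nonneg (hM i j), mul_comm]
  have h7 : (∑ j, M i j * ‖v j‖) * w i ≤ ‖v i‖ * (R * w i) := by
    calc (∑ j, M i j * ‖v j‖) * w i = ∑ j, M i j * (‖v j‖ * w i) := by
          rw [Finset.sum_mul]; exact Finset.sum_congr rfl fun j _ => by ring
      _ ≤ ∑ j, M i j * (‖v i‖ * w j) :=
          Finset.sum_le_sum fun j _ => mul_le_mul_of_nonneg_left (hkey j) (hM i j)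
      _ = ‖v i‖ * ∑ j, M i j * w j := by
          rw [Finset.mul_sum]; exact Finset.sum_congr rfl fun j _ => by ring
      _ ≤ ‖v i‖ * (R * w i) := mul_le_mul_of_nonneg_left (hrow i) (norm_nonneg _)
  have h8 := (mul_le_mul_of_nonneg_right (h5.trans_le h6) (hw i).le).trans h7
  nlinarith [mul_pos hvi (hw i), h8]

lemma aux_eig_lower {n : ℕ} (hn : 0 < n) (M : Matrix (Fin n) (Fin n) ℝ)
    (hM : ∀ i j, 0 ≤ M i j) (v : Fin n → ℝ) (hv : ∀ i, 0 < v i) (c : ℝ) (hc : 0 < c)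
    (hrow : ∀ i, c * v i ≤ ∑ j, M i j * v j) (c' : ℝ) (hc'0 : 0 ≤ c') (hc' : c' < c) :
    ∃ μ ∈ spectrum ℂ (M.map ((↑) : ℝ → ℂ)), c' < ‖μ‖ := by
  have hne : Nonempty (Fin n) := Fin.pos_iff_nonempty.mp hn
  have step1 : ∀ k : ℕ, ∀ i, c ^ k * v i ≤ ((M ^ k) *ᵥ v) i := by
    intro k
    induction k with
    | zero => intro i; simp [Matrix.one_mulVec]
    | succ k ih =>
      intro i
      have he : ((M ^ (k+1)) *ᵥ v) i = ∑ j, M i j * ((M ^ k) *ᵥ v) j := by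
        rw [pow_succ', ← Matrix.mulVec_mulVec]
        simp [Matrix.mulVec, dotProduct]
      rw [he]
      calc c ^ (k+1) * v i = c ^ k * (c * v i) := by ring
        _ ≤ c ^ k * (∑ j, M i j * v j) := mul_le_mul_of_nonneg_left (hrow i) (by positivity)
        _ = ∑ j, M i j * (c ^ k * v j) := by
            rw [Finset.mul_sum]; exact Finset.sum_congr rfl fun j _ => by ring
        _ ≤ ∑ j, M i j * ((M ^ k) *ᵥ v) j :=
            Finset.sum_le_sum fun j _ => mul_le_mul_of_nonneg_left (ih j) (hM i j)
  obtain ⟨i0, -, hi0⟩ := Finset.exists_max_image Finset.univ v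
    ⟨Classical.arbitrary _, Finset.mem_univ _⟩
  have step2 : ∀ k : ℕ, c.toNNReal ^ k ≤ ‖(M.map ((↑) : ℝ → ℂ)) ^ k‖₊ := by
    intro k
    have h3 : (M.map ((↑) : ℝ → ℂ)) ^ k = (M ^ k).map ((↑) : ℝ → ℂ) := by
      have := map_pow (Complex.ofRealHom.mapMatrix) M k
      simp only [RingHom.mapMatrix_apply] at this; exact this.symm
    rw [h3, ← Real.toNNReal_pow hc.le, Real.toNNReal_le_iff_le_coe, coe_nnnorm]
    have h2 : c ^ k ≤ ∑ j, ‖(M ^ k) i0 j‖ := by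
      have h1 : c ^ k * v i0 ≤ (∑ j, ‖(M ^ k) i0 j‖) * v i0 := by
        refine (step1 k i0).trans ?_
        have hee : ((M ^ k) *ᵥ v) i0 = ∑ j, (M ^ k) i0 j * v j := by
          simp [Matrix.mulVec, dotProduct]
        rw [hee, Finset.sum_mul]
        refine Finset.sum_le_sum fun j _ => ?_
        calc (M ^ k) i0 j * v j ≤ ‖(M ^ k) i0 j‖ * v j :=
              mul_le_mul_of_nonneg_right (le_abs_self _) (hv j).le
          _ ≤ ‖(M ^ k) i0 j‖ * v i0 :=
              mul_le_mul_of_nonneg_left (hi0 j (Finset.mem_univ j)) (norm_nonneg _)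
      exact le_of_mul_le_mul_right h1 (hv i0)
    have h4 : (∑ j, ‖((M ^ k).map ((↑) : ℝ → ℂ)) i0 j‖₊) ≤ ‖(M ^ k).map ((↑) : ℝ → ℂ)‖₊ := by
      rw [Matrix.linfty_opNNNorm_def]
      exact Finset.le_sup (f := fun i => ∑ j, ‖((M ^ k).map ((↑) : ℝ → ℂ)) i j‖₊)
        (Finset.mem_univ i0)
    refine le_trans ?_ ((NNReal.coe_le_coe.mpr h4))
    push_cast
    refine h2.trans (le_of_eq (Finset.sum_congr rfl fun j _ => ?_))
    simp [Matrix.map_apply]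
  have step3 : ((c.toNNReal : ℝ≥0∞)) ≤ spectralRadius ℂ (M.map ((↑) : ℝ → ℂ)) := by
    refine ge_of_tendsto (spectrum.pow_nnnorm_pow_one_div_tendsto_nhds_spectralRadius
      (M.map ((↑) : ℝ → ℂ))) ?_
    filter_upwards [eventually_ge_atTop 1] with k hk
    have h1 : (((c.toNNReal : ℝ≥0∞)) ^ k) ^ (1 / (k : ℝ)) ≤
        ((‖(M.map ((↑) : ℝ → ℂ)) ^ k‖₊ : ℝ≥0∞)) ^ (1 / (k : ℝ)) := by
      refine ENNReal.rpow_le_rpow ?_ (by positivity)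
      exact_mod_cast ENNReal.coe_le_coe.mpr (step2 k)
    refine le_trans (le_of_eq ?_) h1
    rw [← ENNReal.rpow_natCast _ k, ← ENNReal.rpow_mul, mul_one_div,
      div_self (by exact_mod_cast Nat.one_le_iff_ne_zero.mp hk), ENNReal.rpow_one]
  by_contra hcon
  push_neg at hcon
  have h6 : spectralRadius ℂ (M.map ((↑) : ℝ → ℂ)) ≤ ((c'.toNNReal : ℝ≥0∞)) := by
    refine iSup₂_le fun μ hμ => ?_
    refine ENNReal.coe_le_coe.mpr ?_
    have h7 := hcon μ hμ
    rw [← norm_toNNReal]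
    exact Real.toNNReal_le_toNNReal_iff hc'0 |>.mpr h7
  have h8 := step3.trans h6
  rw [ENNReal.coe_le_coe, Real.toNNReal_le_toNNReal_iff hc'0] at h8
  linarith

/-- For `2 ≤ d ≤ n-1`,
`2d-2 < q(B_{n,d}) ≤ (3d-3+√((d-1)²+8))/2`. -/
theorem q_B_bounds {n d : ℕ} (hd : 2 ≤ d) (hdn : d ≤ n - 1) :
    2 * (d : ℝ) - 2 < q (B n d) ∧
    q (B n d) ≤ (3 * (d : ℝ) - 3 + Real.sqrt (((d : ℝ) - 1) ^ 2 + 8)) / 2 := by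
  have hdn' : d + 1 ≤ n := by omega
  have hd2 : (2 : ℝ) ≤ (d : ℝ) := by exact_mod_cast hd
  obtain ⟨s, hs⟩ : ∃ x : ℝ, x = Real.sqrt (((d : ℝ) - 1) ^ 2 + 8) := ⟨_, rfl⟩
  have hs2 : s ^ 2 = ((d : ℝ) - 1) ^ 2 + 8 := by rw [hs]; exact Real.sq_sqrt (by positivity)
  have hsge : (d : ℝ) - 1 ≤ s := by
    rw [hs]
    calc (d : ℝ) - 1 = Real.sqrt (((d : ℝ) - 1) ^ 2) := (Real.sqrt_sq (by linarith)).symm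
      _ ≤ _ := Real.sqrt_le_sqrt (by linarith)
  obtain ⟨R, hR⟩ : ∃ x : ℝ, x = (3 * (d : ℝ) - 3 + s) / 2 := ⟨_, rfl⟩
  have hR2d : 2 * (d : ℝ) - 2 ≤ R := by rw [hR]; linarith
  have hRge2 : (2 : ℝ) ≤ R := by linarith
  have hRq : (R - (d : ℝ)) * (R - 2 * d + 3) = (d : ℝ) := by
    rw [hR]; linear_combination hs2 / 4
  obtain ⟨K, hK⟩ : ∃ x : ℝ, x = (R - 1) ^ (n - 1) := ⟨_, rfl⟩
  have hKpos : 0 < K := by rw [hK]; exact pow_pos (by linarith) _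
  obtain ⟨wf, hwf⟩ : ∃ g : ℕ → ℝ, g = fun x => if x = 0 then (R - 2 * d + 3) * K
    else if x < d then K else (R - 1) ^ x := ⟨_, rfl⟩
  have hwfpos : ∀ x, 0 < wf x := by
    intro x
    rw [hwf]; dsimp only
    split_ifs
    · exact mul_pos (by linarith) hKpos
    · exact hKpos
    · exact pow_pos (by linarith) x
  have hIcoU : ∑ b ∈ Finset.Ico 1 d, wf b = ((d : ℝ) - 1) * K := by
    have hc : ∀ b ∈ Finset.Ico 1 d, wf b = K := by
      intro b hb
      rw [Finset.mem_Ico] at hb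
      rw [hwf]; dsimp only
      rw [if_neg (by omega), if_pos hb.2]
    rw [Finset.sum_congr rfl hc, Finset.sum_const, Nat.card_Ico, nsmul_eq_mul]
    push_cast [Nat.cast_sub (show 1 ≤ d by omega)]
    ring
  have hwf0 : wf 0 = (R - 2 * d + 3) * K := by
    rw [hwf]; dsimp only; rw [if_pos rfl]
  have hwfd : wf d = (R - 1) ^ d := by
    rw [hwf]; dsimp only; rw [if_neg (by omega), if_neg (by omega)]
  have hwf1 : wf 1 = K := by
    rw [hwf]; dsimp only; rw [if_neg (by omega), if_pos (by omega)]
  have hRangeU : ∑ b ∈ Finset.range d, wf b = (R - 2 * d + 3) * K + ((d : ℝ) - 1) * K := by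
    rw [Finset.range_eq_Ico, Finset.sum_eq_sum_Ico_succ_bot (by omega : 0 < d), hIcoU, hwf0]
  have hrowU : ∀ i : Fin n, ∑ j, Qmat (B n d) i j * wf (j : ℕ) ≤ R * wf (i : ℕ) := by
    intro i
    rw [aux_Qrow, aux_B_row hd hdn' wf i, aux_B_outdeg hd hdn' i]
    have hin := i.isLt
    split_ifs with h1 h2 h3
    · rw [h1, hIcoU, hwfd, hwf0]
      have hpow : (R - 1) ^ d ≤ K := by
        rw [hK]; exact pow_le_pow_right₀ (by linarith) (by omega)
      have h9 : R * ((R - 2 * d + 3) * K) - d * ((R - 2 * d + 3) * K) = d * K := by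
        linear_combination K * hRq
      linarith
    · rw [hRangeU]
      have hwfi : wf (i : ℕ) = K := by
        rw [hwf]; dsimp only; rw [if_neg h1, if_pos h2]
      rw [hwfi]
      linarith
    · have hwfi : wf (i : ℕ) = (R - 1) ^ (i : ℕ) := by
        rw [hwf]; dsimp only; rw [if_neg h1, if_neg h2]
      have hwfi1 : wf ((i : ℕ) + 1) = (R - 1) ^ ((i : ℕ) + 1) := by
        rw [hwf]; dsimp only; rw [if_neg (by omega), if_neg (by omega)]
      rw [hwfi, hwfi1, pow_succ]
      exact le_of_eq (by ring)
    · rw [hwf1]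
      have hwfi : wf (i : ℕ) = K := by
        rw [hwf]; dsimp only; rw [if_neg h1, if_neg h2, hK]
        congr 1
        omega
      rw [hwfi]
      nlinarith [hKpos]
  -- lower bound data
  obtain ⟨δ, hδ⟩ : ∃ x : ℝ, x = 1 / (2 * (d : ℝ)) := ⟨_, rfl⟩
  have hδpos : 0 < δ := by rw [hδ]; positivity
  have hδd : δ * (2 * (d : ℝ)) = 1 := by rw [hδ]; field_simp
  have hδ4 : δ ≤ 1 / 4 := by
    rw [hδ, div_le_div_iff₀ (by positivity) (by norm_num)]
    linarith
  obtain ⟨c, hc⟩ : ∃ x : ℝ, x = 2 * (d : ℝ) - 2 + δ := ⟨_, rfl⟩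
  have hcpos : 0 < c := by rw [hc]; linarith
  have hc1 : 1 ≤ c - 1 := by rw [hc]; linarith
  have hcd : (c - (d : ℝ)) * (1 + δ) ≤ (d : ℝ) - 1 := by
    rw [hc]; nlinarith [hδd, hδ4, hδpos, hd2]
  obtain ⟨Mc, hMc⟩ : ∃ x : ℝ, x = (c - 1) ^ n := ⟨_, rfl⟩
  have hMcpos : 0 < Mc := by rw [hMc]; exact pow_pos (by linarith) _
  obtain ⟨vf, hvf⟩ : ∃ g : ℕ → ℝ, g = fun x => if x = 0 then (1 + δ) * Mc
    else if x < d then Mc else (c - 1) ^ x := ⟨_, rfl⟩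
  have hvfpos : ∀ x, 0 < vf x := by
    intro x
    rw [hvf]; dsimp only
    split_ifs
    · exact mul_pos (by linarith) hMcpos
    · exact hMcpos
    · exact pow_pos (by linarith) x
  have hIcoL : ∑ b ∈ Finset.Ico 1 d, vf b = ((d : ℝ) - 1) * Mc := by
    have hcg : ∀ b ∈ Finset.Ico 1 d, vf b = Mc := by
      intro b hb
      rw [Finset.mem_Ico] at hb
      rw [hvf]; dsimp only
      rw [if_neg (by omega), if_pos hb.2]
    rw [Finset.sum_congr rfl hcg, Finset.sum_const, Nat.card_Ico, nsmul_eq_mul]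
    push_cast [Nat.cast_sub (show 1 ≤ d by omega)]
    ring
  have hvf0 : vf 0 = (1 + δ) * Mc := by
    rw [hvf]; dsimp only; rw [if_pos rfl]
  have hvfd : vf d = (c - 1) ^ d := by
    rw [hvf]; dsimp only; rw [if_neg (by omega), if_neg (by omega)]
  have hvf1 : vf 1 = Mc := by
    rw [hvf]; dsimp only; rw [if_neg (by omega), if_pos (by omega)]
  have hRangeL : ∑ b ∈ Finset.range d, vf b = (1 + δ) * Mc + ((d : ℝ) - 1) * Mc := by
    rw [Finset.range_eq_Ico, Finset.sum_eq_sum_Ico_succ_bot (by omega : 0 < d), hIcoL, hvf0]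
  have hrowL : ∀ i : Fin n, c * vf (i : ℕ) ≤ ∑ j, Qmat (B n d) i j * vf (j : ℕ) := by
    intro i
    rw [aux_Qrow, aux_B_row hd hdn' vf i, aux_B_outdeg hd hdn' i]
    have hin := i.isLt
    split_ifs with h1 h2 h3
    · rw [h1, hIcoL, hvfd, hvf0]
      have h10 : (c - (d : ℝ)) * (1 + δ) * Mc ≤ ((d : ℝ) - 1) * Mc :=
        mul_le_mul_of_nonneg_right hcd hMcpos.le
      have h11 : (0 : ℝ) ≤ (c - 1) ^ d := pow_nonneg (by linarith) d
      nlinarith [h10, h11]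
    · rw [hRangeL]
      have hvfi : vf (i : ℕ) = Mc := by
        rw [hvf]; dsimp only; rw [if_neg h1, if_pos h2]
      rw [hvfi, hc]
      exact le_of_eq (by ring)
    · have hvfi : vf (i : ℕ) = (c - 1) ^ (i : ℕ) := by
        rw [hvf]; dsimp only; rw [if_neg h1, if_neg h2]
      have hvfi1 : vf ((i : ℕ) + 1) = (c - 1) ^ ((i : ℕ) + 1) := by
        rw [hvf]; dsimp only; rw [if_neg (by omega), if_neg (by omega)]
      rw [hvfi, hvfi1, pow_succ]
      exact le_of_eq (by ring)
    · rw [hvf1]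
      have hvfi : vf (i : ℕ) = (c - 1) ^ (n - 1) := by
        rw [hvf]; dsimp only; rw [if_neg h1, if_neg h2]
        congr 1
        omega
      have hMc' : Mc = (c - 1) ^ (n - 1) * (c - 1) := by
        rw [hMc, ← pow_succ]
        congr 1
        omega
      rw [hvfi, hMc']
      exact le_of_eq (by ring)
  obtain ⟨μ, hμmem, hμgt⟩ := aux_eig_lower (show 0 < n by omega) (Qmat (B n d)) aux_Qnonneg
    (fun j => vf (j : ℕ)) (fun j => hvfpos _) c hcpos (fun i => hrowL i)
    (2 * (d : ℝ) - 2) (by linarith) (by rw [hc]; linarith)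
  have hub : ∀ r ∈ {r : ℝ | ∃ ν ∈ spectrum ℂ ((Qmat (B n d)).map ((↑) : ℝ → ℂ)),
      r = ‖ν‖}, r ≤ R := by
    rintro r ⟨ν, hν, rfl⟩
    exact aux_eig_bound _ aux_Qnonneg (fun j => wf (j : ℕ)) (fun j => hwfpos _) R
      (fun i => hrowU i) ν hν
  have hmem : ‖μ‖ ∈ {r : ℝ | ∃ ν ∈ spectrum ℂ ((Qmat (B n d)).map ((↑) : ℝ → ℂ)),
      r = ‖ν‖} := ⟨μ, hμmem, rfl⟩
  have hbdd : BddAbove {r : ℝ | ∃ ν ∈ spectrum ℂ ((Qmat (B n d)).map ((↑) : ℝ → ℂ)),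
      r = ‖ν‖} := ⟨R, hub⟩
  constructor
  · exact lt_of_lt_of_le hμgt (le_csSup hbdd hmem)
  · calc q (B n d) ≤ R := csSup_le ⟨_, hmem⟩ hub
      _ = _ := by rw [hR, hs]


end SignlessDigraph
end

section
/- Let n ≥ 4. Then 2 = q(C_n^→) < q(B_{n,2}) < 4 < q(B_{n,3}) < 6 < ⋯ < 2n−4 < q(B_{n,n−1}) < q(K_n^↔) = 2n−2; that is, for every d with 2 ≤ d ≤ n−1 one has 2d−2 < q(B_{n,d}) < 2d. -/
open Matrix

namespace SignlessDigraph

variable {n : ℕ}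

section Helpers
open Finset
open scoped NNReal ENNReal
variable {n : ℕ}

lemma mem_spectrum_of_mulVec {A : Matrix (Fin n) (Fin n) ℂ} {μ : ℂ} {v : Fin n → ℂ}
    (hv : v ≠ 0) (h : A *ᵥ v = μ • v) : μ ∈ spectrum ℂ A := by
  rw [spectrum.mem_iff]
  intro hu
  rw [Matrix.isUnit_iff_isUnit_det, isUnit_iff_ne_zero] at hu
  apply hu
  rw [← Matrix.exists_mulVec_eq_zero_iff]
  refine ⟨v, hv, ?_⟩
  rw [Matrix.sub_mulVec, h]
  have : (algebraMap ℂ (Matrix (Fin n) (Fin n) ℂ)) μ *ᵥ v = μ • v := by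
    rw [Matrix.algebraMap_eq_diagonal]
    ext i
    simp [Matrix.mulVec_diagonal, Pi.algebraMap_apply, Algebra.algebraMap_self_apply]
  rw [this, sub_self]

lemma spectrum_transpose {A : Matrix (Fin n) (Fin n) ℂ} :
    spectrum ℂ Aᵀ = spectrum ℂ A := by
  ext μ
  rw [spectrum.mem_iff, spectrum.mem_iff, not_iff_not]
  have : (algebraMap ℂ (Matrix (Fin n) (Fin n) ℂ)) μ - Aᵀ = ((algebraMap ℂ _) μ - A)ᵀ := by
    rw [Matrix.transpose_sub, Matrix.algebraMap_eq_diagonal, Matrix.diagonal_transpose]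
  rw [this, Matrix.isUnit_iff_isUnit_det, Matrix.det_transpose, ← Matrix.isUnit_iff_isUnit_det]

lemma hasEigenvalue_of_mem_spectrum {A : Matrix (Fin n) (Fin n) ℂ} {μ : ℂ}
    (hμ : μ ∈ spectrum ℂ A) : Module.End.HasEigenvalue (Matrix.toLin' A) μ := by
  have h1 : Matrix.toLin' A = Matrix.toLinAlgEquiv' A := rfl
  rw [h1, Module.End.hasEigenvalue_iff_mem_spectrum, AlgEquiv.spectrum_eq]
  exact hμ

lemma gershgorin_col {A : Matrix (Fin n) (Fin n) ℂ} {μ : ℂ} (hμ : μ ∈ spectrum ℂ A) :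
    ∃ k, ‖(μ - A k k)‖ ≤ ∑ j ∈ Finset.univ.erase k, ‖(A j k)‖ := by
  rw [← spectrum_transpose] at hμ
  obtain ⟨k, hk⟩ := eigenvalue_mem_ball (hasEigenvalue_of_mem_spectrum hμ)
  refine ⟨k, ?_⟩
  rw [Metric.mem_closedBall, Complex.dist_eq] at hk
  simpa [Matrix.transpose_apply] using hk
lemma Qmap_apply (W : Fin n → Fin n → ℕ) (i j : Fin n) :
    (Qmat W).map ((↑) : ℝ → ℂ) i j
      = (((if i = j then (outdeg W i : ℝ) else 0) + W i j : ℝ) : ℂ) := by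
  simp [Qmat, adjMat, Matrix.diagonal_apply, Matrix.add_apply]

lemma abs_le_outdeg_add_indeg {W : Fin n → Fin n → ℕ} (hii : ∀ i, W i i = 0) {μ : ℂ} {k : Fin n}
    (hk : ‖(μ - ((Qmat W).map ((↑) : ℝ → ℂ)) k k)‖ ≤
      ∑ j ∈ Finset.univ.erase k, ‖(((Qmat W).map ((↑) : ℝ → ℂ)) j k)‖) :
    ‖μ‖ ≤ (outdeg W k : ℝ) + indeg W k := by
  have hdiag : ((Qmat W).map ((↑) : ℝ → ℂ)) k k = ((outdeg W k : ℝ) : ℂ) := by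
    rw [Qmap_apply]; simp [hii k]
  have hsum : ∑ j ∈ Finset.univ.erase k, ‖(((Qmat W).map ((↑) : ℝ → ℂ)) j k)‖
      = (indeg W k : ℝ) := by
    have h1 : ∀ j ∈ Finset.univ.erase k,
        ‖(((Qmat W).map ((↑) : ℝ → ℂ)) j k)‖ = (W j k : ℝ) := by
      intro j hj
      rw [Qmap_apply, if_neg (Finset.ne_of_mem_erase hj)]
      rw [zero_add, Complex.norm_real, Real.norm_eq_abs, abs_of_nonneg (by positivity)]
    rw [Finset.sum_congr rfl h1, Finset.sum_erase_eq_sub (Finset.mem_univ k), hii k]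
    push_cast [indeg]
    ring
  rw [hdiag, hsum] at hk
  have h2 : ‖μ‖ - ‖((outdeg W k : ℝ) : ℂ)‖ ≤
      ‖(μ - ((outdeg W k : ℝ) : ℂ))‖ := by simpa using norm_sub_norm_le μ ((outdeg W k : ℝ) : ℂ)
  have h3 : ‖((outdeg W k : ℝ) : ℂ)‖ = (outdeg W k : ℝ) := by
    rw [Complex.norm_real, Real.norm_eq_abs, abs_of_nonneg (by positivity)]
  linarith
lemma spec_nonempty (hn : 0 < n) (A : Matrix (Fin n) (Fin n) ℂ) :
    (spectrum ℂ A).Nonempty := by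
  have : NeZero n := ⟨hn.ne'⟩
  letI : NormedRing (Matrix (Fin n) (Fin n) ℂ) := Matrix.linftyOpNormedRing
  letI : NormedAlgebra ℂ (Matrix (Fin n) (Fin n) ℂ) := Matrix.linftyOpNormedAlgebra
  exact spectrum.nonempty A

lemma radius_le {M : Matrix (Fin n) (Fin n) ℝ} {c : ℝ} (hn : 0 < n)
    (h : ∀ μ ∈ spectrum ℂ (M.map ((↑) : ℝ → ℂ)), ‖μ‖ ≤ c) : radius M ≤ c := by
  apply csSup_le
  · obtain ⟨μ, hμ⟩ := spec_nonempty hn (M.map ((↑) : ℝ → ℂ))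
    exact ⟨‖μ‖, μ, hμ, rfl⟩
  · rintro r ⟨μ, hμ, rfl⟩; exact h μ hμ

lemma le_radius {M : Matrix (Fin n) (Fin n) ℝ} {μ : ℂ} {c : ℝ}
    (hμ : μ ∈ spectrum ℂ (M.map ((↑) : ℝ → ℂ)))
    (hub : ∀ ν ∈ spectrum ℂ (M.map ((↑) : ℝ → ℂ)), ‖ν‖ ≤ c) :
    ‖μ‖ ≤ radius M := by
  apply le_csSup
  · exact ⟨c, by rintro r ⟨ν, hν, rfl⟩; exact hub ν hν⟩
  · exact ⟨μ, hμ, rfl⟩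

lemma mulVec_mono {M : Matrix (Fin n) (Fin n) ℝ} (hM : ∀ i j, 0 ≤ M i j)
    {a b : Fin n → ℝ} (hab : ∀ j, a j ≤ b j) (i : Fin n) : (M *ᵥ a) i ≤ (M *ᵥ b) i := by
  simp only [Matrix.mulVec, dotProduct]
  apply Finset.sum_le_sum
  intro j _
  exact mul_le_mul_of_nonneg_left (hab j) (hM i j)

lemma pow_nonneg_entries {M : Matrix (Fin n) (Fin n) ℝ} (hM : ∀ i j, 0 ≤ M i j) :
    ∀ k, ∀ i j, 0 ≤ (M ^ k) i j := by
  intro k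
  induction k with
  | zero => intro i j; simp [Matrix.one_apply]; positivity
  | succ k ih =>
      intro i j
      rw [pow_succ, Matrix.mul_apply]
      exact Finset.sum_nonneg fun l _ => mul_nonneg (ih i l) (hM l j)

lemma exists_abs_ge {Q : Matrix (Fin n) (Fin n) ℝ} (hn : 0 < n) (hQ : ∀ i j, 0 ≤ Q i j)
    {lam : ℝ} (hlam : 0 ≤ lam) {v : Fin n → ℝ} (hv0 : ∀ j, 0 ≤ v j) {i0 : Fin n}
    (hvi0 : ∀ j, v j ≤ v i0) (hpos : 0 < v i0)
    (hmul : ∀ i, lam * v i ≤ (Q *ᵥ v) i) :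
    ∃ μ ∈ spectrum ℂ (Q.map ((↑) : ℝ → ℂ)), lam ≤ ‖μ‖ := by
  have : NeZero n := ⟨hn.ne'⟩
  -- step 2
  have hvk : ∀ k, ∀ i, lam ^ k * v i ≤ ((Q ^ k) *ᵥ v) i := by
    intro k
    induction k with
    | zero => intro i; simp [Matrix.one_mulVec]
    | succ k ih =>
        intro i
        have h1 : ((Q ^ (k+1)) *ᵥ v) i = ((Q ^ k) *ᵥ (Q *ᵥ v)) i := by
          rw [Matrix.mulVec_mulVec, ← pow_succ]
        have h2 : ((Q ^ k) *ᵥ (lam • v)) i ≤ ((Q ^ k) *ᵥ (Q *ᵥ v)) i :=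
          mulVec_mono (pow_nonneg_entries hQ k) (fun j => hmul j) i
        have h3 : ((Q ^ k) *ᵥ (lam • v)) i = lam * (((Q ^ k) *ᵥ v) i) := by
          rw [Matrix.mulVec_smul]; rfl
        have h4 : lam ^ (k+1) * v i = lam * (lam ^ k * v i) := by ring
        rw [h1, h4]
        calc lam * (lam ^ k * v i) ≤ lam * (((Q ^ k) *ᵥ v) i) :=
              mul_le_mul_of_nonneg_left (ih i) hlam
          _ = ((Q ^ k) *ᵥ (lam • v)) i := h3.symm
          _ ≤ _ := h2
  -- step 3: row sums
  have hrow : ∀ k, lam ^ k ≤ ∑ j, (Q ^ k) i0 j := by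
    intro k
    have h1 : ((Q ^ k) *ᵥ v) i0 ≤ (∑ j, (Q ^ k) i0 j) * v i0 := by
      rw [Finset.sum_mul]
      simp only [Matrix.mulVec, dotProduct]
      apply Finset.sum_le_sum
      intro j _
      exact mul_le_mul_of_nonneg_left (hvi0 j) (pow_nonneg_entries hQ k i0 j)
    have h2 := (hvk k i0).trans h1
    calc lam ^ k = lam ^ k * v i0 / v i0 := by field_simp
      _ ≤ (∑ j, (Q ^ k) i0 j) * v i0 / v i0 := by gcongr
      _ = ∑ j, (Q ^ k) i0 j := by field_simp
  -- instances
  letI : NormedRing (Matrix (Fin n) (Fin n) ℂ) := Matrix.linftyOpNormedRing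
  letI : NormedAlgebra ℂ (Matrix (Fin n) (Fin n) ℂ) := Matrix.linftyOpNormedAlgebra
  set A := Q.map ((↑) : ℝ → ℂ) with hA
  have hApow : ∀ k, A ^ k = (Q ^ k).map ((↑) : ℝ → ℂ) := by
    intro k
    induction k with
    | zero => ext i j; simp [Matrix.one_apply, apply_ite]
    | succ k ih =>
        rw [pow_succ, pow_succ, ih]
        ext i j
        simp [Matrix.mul_apply, Matrix.map_apply, hA]
  -- step 5: norm lower bound
  have hnorm : ∀ k, lam ^ k ≤ ‖A ^ k‖ := by
    intro k
    have h1 : (∑ j, ‖(A ^ k) i0 j‖₊) ≤ ‖A ^ k‖₊ := by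
      rw [Matrix.linfty_opNNNorm_def]
      exact Finset.le_sup (f := fun i => ∑ j, ‖(A ^ k) i j‖₊) (Finset.mem_univ i0)
    have h2 : ((∑ j, ‖(A ^ k) i0 j‖₊ : ℝ≥0) : ℝ) = ∑ j, (Q ^ k) i0 j := by
      push_cast
      apply Finset.sum_congr rfl
      intro j _
      rw [hApow k]
      simp only [Matrix.map_apply, Complex.norm_real, Real.norm_eq_abs]
      exact abs_of_nonneg (pow_nonneg_entries hQ k i0 j)
    calc lam ^ k ≤ ∑ j, (Q ^ k) i0 j := hrow k
      _ = ((∑ j, ‖(A ^ k) i0 j‖₊ : ℝ≥0) : ℝ) := h2.symm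
      _ ≤ ((‖A ^ k‖₊ : ℝ≥0) : ℝ) := by exact_mod_cast h1
      _ = ‖A ^ k‖ := rfl
  -- step 6: Gelfand
  have hT := spectrum.pow_nnnorm_pow_one_div_tendsto_nhds_spectralRadius A
  have hsr : ENNReal.ofReal lam ≤ spectralRadius ℂ A := by
    refine ge_of_tendsto hT ?_
    filter_upwards [Filter.eventually_ge_atTop 1] with k hk
    have hk0 : (k : ℝ) ≠ 0 := by positivity
    have h1 : ENNReal.ofReal lam = ((ENNReal.ofReal lam) ^ k) ^ (1 / (k:ℝ)) := by
      rw [← ENNReal.rpow_natCast ((ENNReal.ofReal lam)) k, ← ENNReal.rpow_mul,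
        mul_one_div_cancel hk0, ENNReal.rpow_one]
    rw [h1]
    apply ENNReal.rpow_le_rpow _ (by positivity)
    have h2 : ENNReal.ofReal (lam ^ k) ≤ ENNReal.ofReal ‖A ^ k‖ :=
      ENNReal.ofReal_le_ofReal (hnorm k)
    rwa [ENNReal.ofReal_pow hlam, ofReal_norm, enorm_eq_nnnorm] at h2
  -- step 7
  obtain ⟨z, hz, hznorm⟩ := spectrum.exists_nnnorm_eq_spectralRadius A
  refine ⟨z, hz, ?_⟩
  rw [← hznorm] at hsr
  have : lam ≤ ‖z‖ := by
    have := ENNReal.toReal_mono (by simp) hsr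
    simpa [ENNReal.toReal_ofReal hlam] using this
  exact this

lemma sum_fin_point {M : Type*} [AddCommMonoid M] {a : ℕ} (ha : a < n) (x : M) :
    ∑ j : Fin n, (if (j : ℕ) = a then x else 0) = x := by
  rw [Fin.sum_univ_eq_sum_range (fun j => if j = a then x else 0)]
  rw [Finset.sum_ite_eq' (Finset.range n) a (fun _ => x), if_pos (Finset.mem_range.mpr ha)]

lemma sum_fin_Ico {M : Type*} [AddCommMonoid M] {a b : ℕ} (hb : b ≤ n) (x : M) :
    ∑ j : Fin n, (if a ≤ (j : ℕ) ∧ (j : ℕ) < b then x else 0) = (b - a) • x := by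
  rw [Fin.sum_univ_eq_sum_range (fun j => if a ≤ j ∧ j < b then x else 0)]
  have h1 : ∀ j ∈ Finset.range n, (if a ≤ j ∧ j < b then x else 0)
      = (if j ∈ Finset.Ico a b then x else 0) := by
    intro j _; simp [Finset.mem_Ico]
  rw [Finset.sum_congr rfl h1, Finset.sum_ite_mem, Finset.range_eq_Ico, Finset.Ico_inter_Ico]
  simp only [Finset.sum_const, Nat.card_Ico, max_eq_right (Nat.zero_le a), min_eq_right hb]

lemma sum_fin_Ico_real {a b : ℕ} (hb : b ≤ n) (x : ℝ) :
    ∑ j : Fin n, (if a ≤ (j : ℕ) ∧ (j : ℕ) < b then x else 0) = ((b - a : ℕ) : ℝ) * x := by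
  rw [sum_fin_Ico hb x, nsmul_eq_mul]

lemma sum_fin_Ico_nat {a b : ℕ} (hb : b ≤ n) :
    ∑ j : Fin n, (if a ≤ (j : ℕ) ∧ (j : ℕ) < b then 1 else 0) = b - a := by
  rw [sum_fin_Ico hb 1, smul_eq_mul, mul_one]

lemma q_eq_of_regular {W : Fin n → Fin n → ℕ} (hn : 0 < n) (hii : ∀ i, W i i = 0) {r : ℕ}
    (hout : ∀ i, outdeg W i = r) (hio : ∀ k, outdeg W k + indeg W k ≤ 2 * r) :
    q W = 2 * (r : ℝ) := by
  have hub : ∀ μ ∈ spectrum ℂ ((Qmat W).map ((↑) : ℝ → ℂ)), ‖μ‖ ≤ 2 * (r : ℝ) := by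
    intro μ hμ
    obtain ⟨k, hk⟩ := gershgorin_col hμ
    have h1 := abs_le_outdeg_add_indeg hii hk
    have h2 : (outdeg W k : ℝ) + indeg W k ≤ 2 * (r : ℝ) := by exact_mod_cast hio k
    linarith
  have hrow : ∀ i, ∑ j, Qmat W i j = 2 * (r : ℝ) := by
    intro i
    have h1 : ∑ j, Qmat W i j
        = (∑ j, (if i = j then (outdeg W i : ℝ) else 0)) + ∑ j, (W i j : ℝ) := by
      rw [← Finset.sum_add_distrib]
      apply Finset.sum_congr rfl
      intro j _
      simp [Qmat, adjMat, Matrix.diagonal_apply, Matrix.add_apply]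
    have h2 : ∑ j, (W i j : ℝ) = ((outdeg W i : ℕ) : ℝ) := by
      rw [outdeg]; push_cast; rfl
    rw [h1, Finset.sum_ite_eq, if_pos (Finset.mem_univ i), h2, hout i]
    ring
  have hmem : ((2 * (r : ℝ) : ℝ) : ℂ) ∈ spectrum ℂ ((Qmat W).map ((↑) : ℝ → ℂ)) := by
    apply mem_spectrum_of_mulVec (v := fun _ => 1)
    · intro h
      have := congrFun h ⟨0, hn⟩
      simpa using this
    · ext i
      simp only [Matrix.mulVec, dotProduct, mul_one, Pi.smul_apply, smul_eq_mul]
      have h3 : ∑ j, ((Qmat W).map ((↑) : ℝ → ℂ)) i j = ((∑ j, Qmat W i j : ℝ) : ℂ) := by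
        rw [Complex.ofReal_sum]
        rfl
      rw [h3, hrow i]
  have hle : q W ≤ 2 * (r : ℝ) := radius_le hn hub
  have hge : 2 * (r : ℝ) ≤ q W := by
    have h4 := le_radius hmem hub
    rwa [Complex.norm_real, Real.norm_eq_abs, abs_of_nonneg (by positivity)] at h4
  linarith

lemma fin_mod_succ (i : Fin n) : ((i : ℕ) + 1) % n = if (i : ℕ) + 1 = n then 0 else (i : ℕ) + 1 := by
  have := i.isLt
  split_ifs with h
  · rw [h, Nat.mod_self]
  · exact Nat.mod_eq_of_lt (by omega)

lemma outdeg_cyc (hn : 0 < n) (i : Fin n) : outdeg (cyc n) i = 1 := by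
  rw [outdeg]
  simp only [cyc]
  exact sum_fin_point (Nat.mod_lt _ hn) 1

lemma indeg_cyc (hn : 2 ≤ n) (k : Fin n) : indeg (cyc n) k = 1 := by
  have hk := k.isLt
  have ha : (if (k : ℕ) = 0 then n - 1 else (k : ℕ) - 1) < n := by split_ifs <;> omega
  have h1 : ∀ j : Fin n, cyc n j k
      = if (j : ℕ) = (if (k : ℕ) = 0 then n - 1 else (k : ℕ) - 1) then 1 else 0 := by
    intro j
    have hj := j.isLt
    simp only [cyc, fin_mod_succ j]
    split_ifs <;> omega
  rw [indeg, Finset.sum_congr rfl (fun j _ => h1 j), sum_fin_point ha]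

lemma cyc_diag (hn : 2 ≤ n) (i : Fin n) : cyc n i i = 0 := by
  have := i.isLt
  simp only [cyc, fin_mod_succ i]
  split_ifs <;> omega

lemma q_cyc (hn : 4 ≤ n) : q (cyc n) = 2 := by
  have h := q_eq_of_regular (W := cyc n) (by omega) (cyc_diag (by omega))
    (r := 1) (outdeg_cyc (by omega))
    (fun k => by rw [outdeg_cyc (by omega), indeg_cyc (by omega)])
  rw [h]; norm_num

lemma outdeg_K (hn : 0 < n) (i : Fin n) : outdeg (Kcomp n) i = n - 1 := by
  have h1 : ∀ j : Fin n, Kcomp n i j + (if (j : ℕ) = (i : ℕ) then 1 else 0)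
      = if 0 ≤ (j : ℕ) ∧ (j : ℕ) < n then 1 else 0 := by
    intro j
    have hj := j.isLt
    simp only [Kcomp, Fin.ext_iff]
    split_ifs <;> omega
  have h2 : outdeg (Kcomp n) i + 1 = n - 0 := by
    have h3 := Finset.sum_congr rfl (fun j (_ : j ∈ (Finset.univ : Finset (Fin n))) => h1 j)
    rw [Finset.sum_add_distrib, sum_fin_point i.isLt, sum_fin_Ico_nat (le_refl n)] at h3
    exact h3
  omega

lemma indeg_K (hn : 0 < n) (k : Fin n) : indeg (Kcomp n) k = n - 1 := by
  have h1 : ∀ j : Fin n, Kcomp n j k + (if (j : ℕ) = (k : ℕ) then 1 else 0)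
      = if 0 ≤ (j : ℕ) ∧ (j : ℕ) < n then 1 else 0 := by
    intro j
    have hj := j.isLt
    simp only [Kcomp, Fin.ext_iff]
    split_ifs <;> omega
  have h2 : indeg (Kcomp n) k + 1 = n - 0 := by
    have h3 := Finset.sum_congr rfl (fun j (_ : j ∈ (Finset.univ : Finset (Fin n))) => h1 j)
    rw [Finset.sum_add_distrib, sum_fin_point k.isLt, sum_fin_Ico_nat (le_refl n)] at h3
    exact h3
  omega

lemma q_K (hn : 4 ≤ n) : q (Kcomp n) = 2 * (n : ℝ) - 2 := by
  have h := q_eq_of_regular (W := Kcomp n) (by omega) (fun i => by simp [Kcomp])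
    (r := n - 1) (outdeg_K (by omega))
    (fun k => by rw [outdeg_K (by omega), indeg_K (by omega)]; omega)
  rw [h, Nat.cast_sub (by omega)]
  push_cast
  ring

section Bfacts
variable {d : ℕ}

lemma B_diag (hn4 : 4 ≤ n) (hd2 : 2 ≤ d) (i : Fin n) : B n d i i = 0 := by
  have hi := i.isLt
  rw [B, if_neg (by simp), if_neg (by omega), if_neg (by omega), if_neg (by omega)]

lemma B_outdeg_0 (hd2 : 2 ≤ d) (hdn : d + 1 ≤ n) {i : Fin n} (hi : (i : ℕ) = 0) :
    outdeg (B n d) i = d := by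
  have h1 : ∀ j : Fin n, B n d i j
      = (if 1 ≤ (j : ℕ) ∧ (j : ℕ) < d then 1 else 0) + (if (j : ℕ) = d then 1 else 0) := by
    intro j
    have hj := j.isLt
    simp only [B, ne_eq, Fin.ext_iff]
    split_ifs <;> omega
  rw [outdeg, Finset.sum_congr rfl (fun j _ => h1 j), Finset.sum_add_distrib,
    sum_fin_Ico_nat (by omega), sum_fin_point (show d < n by omega)]
  omega

lemma B_outdeg_clique (hd2 : 2 ≤ d) (hdn : d + 1 ≤ n) {i : Fin n}
    (hi1 : 1 ≤ (i : ℕ)) (hi2 : (i : ℕ) < d) : outdeg (B n d) i = d - 1 := by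
  have h1 : ∀ j : Fin n, B n d i j + (if (j : ℕ) = (i : ℕ) then 1 else 0)
      = if 0 ≤ (j : ℕ) ∧ (j : ℕ) < d then 1 else 0 := by
    intro j
    have hj := j.isLt
    simp only [B, ne_eq, Fin.ext_iff]
    split_ifs <;> omega
  have h2 := Finset.sum_congr rfl (fun j (_ : j ∈ (Finset.univ : Finset (Fin n))) => h1 j)
  rw [Finset.sum_add_distrib, sum_fin_point i.isLt, sum_fin_Ico_nat (by omega)] at h2
  have h3 : outdeg (B n d) i + 1 = d - 0 := h2
  omega

lemma B_outdeg_path (hd2 : 2 ≤ d) (hdn : d + 1 ≤ n) {i : Fin n} (hi : d ≤ (i : ℕ)) :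
    outdeg (B n d) i = 1 := by
  have hi' := i.isLt
  have ha : (if (i : ℕ) = n - 1 then 1 else (i : ℕ) + 1) < n := by split_ifs <;> omega
  have h1 : ∀ j : Fin n, B n d i j
      = if (j : ℕ) = (if (i : ℕ) = n - 1 then 1 else (i : ℕ) + 1) then 1 else 0 := by
    intro j
    have hj := j.isLt
    simp only [B, ne_eq, Fin.ext_iff]
    split_ifs <;> omega
  rw [outdeg, Finset.sum_congr rfl (fun j _ => h1 j), sum_fin_point ha]

lemma B_indeg_0 (hd2 : 2 ≤ d) (hdn : d + 1 ≤ n) {k : Fin n} (hk : (k : ℕ) = 0) :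
    indeg (B n d) k = d - 1 := by
  have h1 : ∀ j : Fin n, B n d j k = if 1 ≤ (j : ℕ) ∧ (j : ℕ) < d then 1 else 0 := by
    intro j
    have hj := j.isLt
    simp only [B, ne_eq, Fin.ext_iff]
    split_ifs <;> omega
  rw [indeg, Finset.sum_congr rfl (fun j _ => h1 j), sum_fin_Ico_nat (by omega)]

lemma B_indeg_1 (hn4 : 4 ≤ n) (hd2 : 2 ≤ d) (hdn : d + 1 ≤ n) {k : Fin n} (hk : (k : ℕ) = 1) :
    indeg (B n d) k = d := by
  have h1 : ∀ j : Fin n, B n d j k + (if (j : ℕ) = 1 then 1 else 0)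
      = (if 0 ≤ (j : ℕ) ∧ (j : ℕ) < d then 1 else 0) + (if (j : ℕ) = n - 1 then 1 else 0) := by
    intro j
    have hj := j.isLt
    simp only [B, ne_eq, Fin.ext_iff]
    split_ifs <;> omega
  have h2 := Finset.sum_congr rfl (fun j (_ : j ∈ (Finset.univ : Finset (Fin n))) => h1 j)
  rw [Finset.sum_add_distrib, Finset.sum_add_distrib, sum_fin_point (show 1 < n by omega),
    sum_fin_point (show n - 1 < n by omega), sum_fin_Ico_nat (by omega)] at h2
  have h3 : indeg (B n d) k + 1 = (d - 0) + 1 := h2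
  omega

lemma B_indeg_clique (hd2 : 2 ≤ d) (hdn : d + 1 ≤ n) {k : Fin n}
    (hk1 : 2 ≤ (k : ℕ)) (hk2 : (k : ℕ) < d) : indeg (B n d) k = d - 1 := by
  have h1 : ∀ j : Fin n, B n d j k + (if (j : ℕ) = (k : ℕ) then 1 else 0)
      = if 0 ≤ (j : ℕ) ∧ (j : ℕ) < d then 1 else 0 := by
    intro j
    have hj := j.isLt
    simp only [B, ne_eq, Fin.ext_iff]
    split_ifs <;> omega
  have h2 := Finset.sum_congr rfl (fun j (_ : j ∈ (Finset.univ : Finset (Fin n))) => h1 j)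
  rw [Finset.sum_add_distrib, sum_fin_point k.isLt, sum_fin_Ico_nat (by omega)] at h2
  have h3 : indeg (B n d) k + 1 = d - 0 := h2
  omega

lemma B_indeg_path (hn4 : 4 ≤ n) (hd2 : 2 ≤ d) (hdn : d + 1 ≤ n) {k : Fin n}
    (hk : d ≤ (k : ℕ)) : indeg (B n d) k = 1 := by
  have hk' := k.isLt
  have ha : (if (k : ℕ) = d then 0 else (k : ℕ) - 1) < n := by split_ifs <;> omega
  have h1 : ∀ j : Fin n, B n d j k
      = if (j : ℕ) = (if (k : ℕ) = d then 0 else (k : ℕ) - 1) then 1 else 0 := by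
    intro j
    have hj := j.isLt
    simp only [B, ne_eq, Fin.ext_iff]
    split_ifs <;> omega
  rw [indeg, Finset.sum_congr rfl (fun j _ => h1 j), sum_fin_point ha]

lemma B_deg_bound (hn4 : 4 ≤ n) (hd2 : 2 ≤ d) (hdn : d + 1 ≤ n) (k : Fin n) :
    outdeg (B n d) k + indeg (B n d) k ≤ 2 * d - 1 := by
  rcases Nat.lt_or_ge (k : ℕ) d with hk | hk
  · rcases Nat.eq_zero_or_pos (k : ℕ) with hk0 | hk0
    · rw [B_outdeg_0 hd2 hdn hk0, B_indeg_0 hd2 hdn hk0]; omega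
    · rcases Nat.lt_or_ge (k : ℕ) 2 with hk1 | hk1
      · have hk1' : (k : ℕ) = 1 := by omega
        rw [B_outdeg_clique hd2 hdn (by omega) hk, B_indeg_1 hn4 hd2 hdn hk1']; omega
      · rw [B_outdeg_clique hd2 hdn (by omega) hk, B_indeg_clique hd2 hdn hk1 hk]; omega
  · rw [B_outdeg_path hd2 hdn hk, B_indeg_path hn4 hd2 hdn hk]; omega

lemma B_abs_ub (hn4 : 4 ≤ n) (hd2 : 2 ≤ d) (hdn : d + 1 ≤ n) :
    ∀ μ ∈ spectrum ℂ ((Qmat (B n d)).map ((↑) : ℝ → ℂ)),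
      ‖μ‖ ≤ 2 * (d : ℝ) - 1 := by
  intro μ hμ
  obtain ⟨k, hk⟩ := gershgorin_col hμ
  have h1 := abs_le_outdeg_add_indeg (B_diag hn4 hd2) hk
  have h2 : (outdeg (B n d) k : ℝ) + indeg (B n d) k ≤ 2 * (d : ℝ) - 1 := by
    have h3 := B_deg_bound hn4 hd2 hdn k
    have h4 : ((outdeg (B n d) k + indeg (B n d) k : ℕ) : ℝ) ≤ ((2 * d - 1 : ℕ) : ℝ) := by
      exact_mod_cast h3
    rw [Nat.cast_sub (by omega)] at h4
    push_cast at h4 ⊢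
    linarith
  linarith

lemma q_B_lt (hn4 : 4 ≤ n) (hd2 : 2 ≤ d) (hdn : d + 1 ≤ n) : q (B n d) < 2 * (d : ℝ) := by
  have h1 : q (B n d) ≤ 2 * (d : ℝ) - 1 := radius_le (by omega) (B_abs_ub hn4 hd2 hdn)
  linarith

end Bfacts

section Blower
variable {d : ℕ}

lemma q_B_gt (hn4 : 4 ≤ n) (hd2 : 2 ≤ d) (hdn : d + 1 ≤ n) :
    2 * (d : ℝ) - 2 < q (B n d) := by
  have hn0 : 0 < n := by omega
  set D : ℝ := (d : ℝ) with hD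
  have hD2 : (2 : ℝ) ≤ D := by rw [hD]; exact_mod_cast hd2
  have hD0 : (0 : ℝ) < D := by linarith
  set t : ℝ := 1 / (2 * D) with ht
  have ht0 : 0 < t := by positivity
  have ht2 : 2 * (t * D) = 1 := by rw [ht]; field_simp
  have ht4 : t ≤ 1 / 2 := by rw [ht, div_le_div_iff₀ (by linarith) (by norm_num)]; linarith
  set lam : ℝ := 2 * D - 2 + t with hlam
  have hlam0 : 0 ≤ lam := by rw [hlam]; linarith
  set v : Fin n → ℝ := fun j => if (j : ℕ) = 0 then 1 + t else if (j : ℕ) < d then 1 else 0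
    with hv
  have hQnn : ∀ i j, 0 ≤ Qmat (B n d) i j := by
    intro i j
    simp only [Qmat, adjMat, Matrix.add_apply, Matrix.diagonal_apply]
    apply add_nonneg
    · split_ifs <;> positivity
    · positivity
  have hv0 : ∀ j, 0 ≤ v j := by
    intro j; rw [hv]; dsimp only; split_ifs <;> linarith
  have hval : v ⟨0, hn0⟩ = 1 + t := by
    rw [hv]; simp
  have hvle : ∀ j, v j ≤ v ⟨0, hn0⟩ := by
    intro j; rw [hval, hv]; dsimp only; split_ifs <;> linarith
  have hvpos : 0 < v ⟨0, hn0⟩ := by rw [hval]; linarith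
  have hQv : ∀ i, (Qmat (B n d) *ᵥ v) i
      = (outdeg (B n d) i : ℝ) * v i + ∑ j, (B n d i j : ℝ) * v j := by
    intro i
    simp only [Matrix.mulVec, dotProduct, Qmat, Matrix.add_apply, adjMat,
      Matrix.diagonal_apply, add_mul]
    rw [Finset.sum_add_distrib]
    congr 1
    have h1 : ∀ j, (if i = j then (outdeg (B n d) i : ℝ) else 0) * v j
        = (if i = j then (outdeg (B n d) i : ℝ) * v i else 0) := by
      intro j
      split_ifs with h
      · rw [h]
      · rw [zero_mul]
    rw [Finset.sum_congr rfl (fun j _ => h1 j), Finset.sum_ite_eq,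
      if_pos (Finset.mem_univ i)]
  have hmul : ∀ i, lam * v i ≤ (Qmat (B n d) *ᵥ v) i := by
    intro i
    have hi' := i.isLt
    rw [hQv i]
    rcases Nat.lt_or_ge (i : ℕ) d with hid | hid
    · rcases Nat.eq_zero_or_pos (i : ℕ) with hi0 | hi0
      · -- row 0
        have hvi : v i = 1 + t := by rw [hv]; dsimp only; rw [if_pos hi0]
        have hsum : ∑ j, (B n d i j : ℝ) * v j = ((d - 1 : ℕ) : ℝ) * 1 := by
          have hpt : ∀ j : Fin n, (B n d i j : ℝ) * v j
              = if 1 ≤ (j : ℕ) ∧ (j : ℕ) < d then (1 : ℝ) else 0 := by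
            intro j
            have hj := j.isLt
            rw [hv]
            simp only [B, ne_eq, Fin.ext_iff]
            split_ifs <;> first | (push_cast; ring1) | omega | (exfalso; omega)
          rw [Finset.sum_congr rfl (fun j _ => hpt j), sum_fin_Ico_real (by omega) 1]
        rw [hvi, hsum, B_outdeg_0 hd2 hdn hi0]
        rw [Nat.cast_sub (by omega)]
        push_cast
        rw [hlam]
        nlinarith [ht2, ht4, ht0, hD2, mul_le_mul_of_nonneg_left ht4 (le_of_lt ht0)]
      · -- clique row, 1 ≤ i < d
        have hvi : v i = 1 := by
          rw [hv]; dsimp only; rw [if_neg (by omega), if_pos hid]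
        have hsum : ∑ j, (B n d i j : ℝ) * v j
            = (1 + t) + (((i : ℕ) - 1 : ℕ) : ℝ) * 1 + ((d - ((i : ℕ) + 1) : ℕ) : ℝ) * 1 := by
          have hpt : ∀ j : Fin n, (B n d i j : ℝ) * v j
              = ((if (j : ℕ) = 0 then (1 + t : ℝ) else 0)
                + (if 1 ≤ (j : ℕ) ∧ (j : ℕ) < (i : ℕ) then (1 : ℝ) else 0))
                + (if (i : ℕ) + 1 ≤ (j : ℕ) ∧ (j : ℕ) < d then (1 : ℝ) else 0) := by
            intro j
            have hj := j.isLt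
            rw [hv]
            simp only [B, ne_eq, Fin.ext_iff]
            split_ifs <;> first | (push_cast; ring1) | omega | (exfalso; omega)
          rw [Finset.sum_congr rfl (fun j _ => hpt j), Finset.sum_add_distrib,
            Finset.sum_add_distrib, sum_fin_point hn0 (1 + t),
            sum_fin_Ico_real (by omega) 1, sum_fin_Ico_real (by omega) 1]
        rw [hvi, hsum, B_outdeg_clique hd2 hdn hi0 hid]
        rw [Nat.cast_sub (by omega), Nat.cast_sub (by omega), Nat.cast_sub (by omega)]
        push_cast
        rw [hlam]
        linarith
    · -- path row
      have hvi : v i = 0 := by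
        rw [hv]; dsimp only; rw [if_neg (by omega), if_neg (by omega)]
      rw [hvi, mul_zero]
      apply add_nonneg
      · simp
      · exact Finset.sum_nonneg fun j _ => mul_nonneg (by positivity) (hv0 j)
  obtain ⟨μ, hμ, hge⟩ := exists_abs_ge hn0 hQnn hlam0 hv0 hvle hvpos hmul
  have h1 : ‖μ‖ ≤ q (B n d) := le_radius hμ (B_abs_ub hn4 hd2 hdn)
  have h2 : lam ≤ q (B n d) := le_trans hge h1
  rw [hlam] at h2
  linarith

end Blower

end Helpers

/-- For `n ≥ 4`:
`2 = q(C_n^→) < q(B_{n,2}) < 4 < q(B_{n,3}) < 6 < ⋯ < 2n-4 < q(B_{n,n-1}) < q(K_n^↔) = 2n-2`,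
i.e. `q(C_n^→) = 2`, `q(K_n^↔) = 2n-2`, and `2d-2 < q(B_{n,d}) < 2d` for all `2 ≤ d ≤ n-1`. -/
theorem q_B_chain {n : ℕ} (hn : 4 ≤ n) :
    q (cyc n) = 2 ∧ q (Kcomp n) = 2 * (n : ℝ) - 2 ∧
    ∀ d : ℕ, 2 ≤ d → d ≤ n - 1 →
      2 * (d : ℝ) - 2 < q (B n d) ∧ q (B n d) < 2 * (d : ℝ) := by
  refine ⟨q_cyc hn, q_K hn, fun d hd2 hdn => ?_⟩
  have hdn' : d + 1 ≤ n := by omega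
  exact ⟨q_B_gt hn hd2 hdn', q_B_lt hn hd2 hdn'⟩

end SignlessDigraph
end

section
/- Let 2 ≤ g ≤ n−1, let C'_{n,g} = C_{n,g} − {(u_n,u_1)} + {(u_n,u_g)}, and let x = (x_1,…,x_n)^T be the unique positive unit eigenvector of Q(C_{n,g}) corresponding to q(C_{n,g}), with x_i the coordinate at vertex u_i. Then (1) x_{g+1} < x_{g+2} < ⋯ < x_n < x_1 < x_2 < ⋯ < x_g, and (2) q(C'_{n,g}) > q(C_{n,g}). -/
open Matrix

namespace SignlessDigraph

variable {n : ℕ}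

open Filter Topology
open scoped NNReal ENNReal

lemma QrowA (W : Fin n → Fin n → ℕ) (x : Fin n → ℝ) (i a : Fin n)
    (h : ∀ j, W i j = if j = a then 1 else 0) :
    (Qmat W *ᵥ x) i = x i + x a := by
  have hd : outdeg W i = 1 := by
    simp only [outdeg, h]
    rw [Finset.sum_ite_eq' Finset.univ a (fun _ => (1:ℕ))]
    simp
  have hs : ∀ j, (W i j : ℝ) * x j = if j = a then x j else 0 := by
    intro j; rw [h]; by_cases hj : j = a <;> simp [hj]
  simp only [Qmat, Matrix.add_mulVec, Pi.add_apply, Matrix.mulVec_diagonal, hd]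
  simp only [Matrix.mulVec, dotProduct, adjMat, hs]
  rw [Finset.sum_ite_eq' Finset.univ a x]
  simp

lemma QrowB (W : Fin n → Fin n → ℕ) (x : Fin n → ℝ) (i a b : Fin n)
    (h : ∀ j, W i j = (if j = a then 1 else 0) + (if j = b then 1 else 0)) :
    (Qmat W *ᵥ x) i = 2 * x i + (x a + x b) := by
  have hd : outdeg W i = 2 := by
    simp only [outdeg, h]
    rw [Finset.sum_add_distrib, Finset.sum_ite_eq' Finset.univ a (fun _ => (1:ℕ)),
      Finset.sum_ite_eq' Finset.univ b (fun _ => (1:ℕ))]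
    simp
  have hs : ∀ j, (W i j : ℝ) * x j =
      (if j = a then x j else 0) + (if j = b then x j else 0) := by
    intro j; rw [h]; push_cast; split_ifs <;> ring
  simp only [Qmat, Matrix.add_mulVec, Pi.add_apply, Matrix.mulVec_diagonal, hd]
  simp only [Matrix.mulVec, dotProduct, adjMat, hs]
  rw [Finset.sum_add_distrib, Finset.sum_ite_eq' Finset.univ a x,
    Finset.sum_ite_eq' Finset.univ b x]
  simp only [Finset.mem_univ, if_true]; ring

lemma Cng_rowA {g : ℕ} (i : Fin n) (h1 : (i:ℕ) ≠ g - 1) (h2 : (i:ℕ) + 1 < n) (j : Fin n) :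
    Cng n g i j = if j = (⟨(i:ℕ)+1, h2⟩ : Fin n) then 1 else 0 := by
  have hj := j.isLt
  simp only [Cng, Fin.ext_iff]
  split_ifs <;> omega

lemma Cng_rowB {g : ℕ} (hg : 2 ≤ g) (hgn : g ≤ n - 1) (i : Fin n) (hi : (i:ℕ) = g - 1)
    (j : Fin n) :
    Cng n g i j = (if j = (⟨g, by omega⟩ : Fin n) then 1 else 0) +
      (if j = (⟨0, by omega⟩ : Fin n) then 1 else 0) := by
  have hj := j.isLt
  simp only [Cng, Fin.ext_iff]
  split_ifs <;> omega

lemma Cng_rowC {g : ℕ} (hg : 2 ≤ g) (hgn : g ≤ n - 1) (i : Fin n) (hi : (i:ℕ) = n - 1)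
    (j : Fin n) :
    Cng n g i j = if j = (⟨0, by omega⟩ : Fin n) then 1 else 0 := by
  have hj := j.isLt
  have hi2 := i.isLt
  simp only [Cng, Fin.ext_iff]
  split_ifs <;> omega

lemma Cng'_rowA {g : ℕ} (i : Fin n) (h1 : (i:ℕ) ≠ g - 1) (h2 : (i:ℕ) + 1 < n) (j : Fin n) :
    Cng' n g i j = if j = (⟨(i:ℕ)+1, h2⟩ : Fin n) then 1 else 0 := by
  have hj := j.isLt
  simp only [Cng', Cng, Fin.ext_iff]
  split_ifs <;> omega

lemma Cng'_rowB {g : ℕ} (hg : 2 ≤ g) (hgn : g ≤ n - 1) (i : Fin n) (hi : (i:ℕ) = g - 1)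
    (j : Fin n) :
    Cng' n g i j = (if j = (⟨g, by omega⟩ : Fin n) then 1 else 0) +
      (if j = (⟨0, by omega⟩ : Fin n) then 1 else 0) := by
  have hj := j.isLt
  have hi2 := i.isLt
  simp only [Cng', Cng, Fin.ext_iff]
  split_ifs <;> omega

lemma Cng'_rowC {g : ℕ} (hg : 2 ≤ g) (hgn : g ≤ n - 1) (i : Fin n) (hi : (i:ℕ) = n - 1)
    (j : Fin n) :
    Cng' n g i j = if j = (⟨g - 1, by omega⟩ : Fin n) then 1 else 0 := by
  have hj := j.isLt
  have hi2 := i.isLt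
  simp only [Cng', Cng, Fin.ext_iff]
  split_ifs <;> omega

attribute [local instance] Matrix.linftyOpNormedRing Matrix.linftyOpNormedAlgebra

lemma le_radius_of_mulVec_le {n : ℕ} (hn : 0 < n) (M : Matrix (Fin n) (Fin n) ℝ)
    (hM : ∀ i j, 0 ≤ M i j) (z : Fin n → ℝ) (hz : ∀ i, 0 < z i)
    (r : ℝ) (hr : 0 < r) (hMz : ∀ i, r * z i ≤ (M *ᵥ z) i) :
    r ≤ radius M := by
  haveI : Nonempty (Fin n) := ⟨⟨0, hn⟩⟩
  have hMp : ∀ k : ℕ, ∀ i j, 0 ≤ (M ^ k) i j := by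
    intro k
    induction k with
    | zero =>
      intro i j
      rw [pow_zero]
      by_cases h : i = j <;> simp [Matrix.one_apply, h]
    | succ m ih =>
      intro i j
      rw [pow_succ, Matrix.mul_apply]
      exact Finset.sum_nonneg fun l _ => mul_nonneg (ih i l) (hM l j)
  have hpow : ∀ k : ℕ, ∀ i, r ^ k * z i ≤ ((M ^ k) *ᵥ z) i := by
    intro k
    induction k with
    | zero => intro i; simp [Matrix.one_mulVec]
    | succ m ih =>
      intro i
      have h1 : (M ^ (m+1)) *ᵥ z = M *ᵥ ((M ^ m) *ᵥ z) := by
        rw [Matrix.mulVec_mulVec, ← pow_succ']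
      have h3 : ∑ j, M i j * (r ^ m * z j) ≤ (M *ᵥ ((M ^ m) *ᵥ z)) i := by
        simp only [Matrix.mulVec, dotProduct]
        exact Finset.sum_le_sum fun j _ => mul_le_mul_of_nonneg_left (ih j) (hM i j)
      have h4 : ∑ j, M i j * (r ^ m * z j) = r ^ m * (M *ᵥ z) i := by
        simp only [Matrix.mulVec, dotProduct, Finset.mul_sum]
        exact Finset.sum_congr rfl fun j _ => by ring
      have h5 : r ^ (m+1) * z i ≤ r ^ m * (M *ᵥ z) i := by
        rw [pow_succ]
        calc r ^ m * r * z i = r ^ m * (r * z i) := by ring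
          _ ≤ r ^ m * (M *ᵥ z) i :=
            mul_le_mul_of_nonneg_left (hMz i) (le_of_lt (pow_pos hr m))
      rw [h1]
      exact le_trans h5 (le_trans (le_of_eq h4.symm) h3)
  set i0 : Fin n := ⟨0, hn⟩ with hi0
  have hZne : (Finset.univ : Finset (Fin n)).Nonempty := Finset.univ_nonempty
  set Z : ℝ := Finset.univ.sup' hZne z with hZ
  have hZpos : 0 < Z := lt_of_lt_of_le (hz i0) (Finset.le_sup' z (Finset.mem_univ i0))
  set C : ℝ := z i0 / Z with hC
  have hCpos : 0 < C := div_pos (hz i0) hZpos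
  have hnorm : ∀ k : ℕ, C * r ^ k ≤ ‖M ^ k‖ := by
    intro k
    have h1 : r ^ k * z i0 ≤ ((M ^ k) *ᵥ z) i0 := hpow k i0
    have h2 : ((M ^ k) *ᵥ z) i0 ≤ (∑ j, (M ^ k) i0 j) * Z := by
      simp only [Matrix.mulVec, dotProduct, Finset.sum_mul]
      exact Finset.sum_le_sum fun j _ => mul_le_mul_of_nonneg_left
        (Finset.le_sup' z (Finset.mem_univ j)) (hMp k i0 j)
    have h3 : ∑ j, (M ^ k) i0 j ≤ ‖M ^ k‖ := by
      rw [Matrix.linfty_opNorm_def]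
      have h4 : (∑ j, ‖(M ^ k) i0 j‖₊ : ℝ≥0) ≤
          (Finset.univ.sup fun i => ∑ j, ‖(M ^ k) i j‖₊ : ℝ≥0) :=
        Finset.le_sup (f := fun i => ∑ j, ‖(M ^ k) i j‖₊) (Finset.mem_univ i0)
      calc ∑ j, (M ^ k) i0 j = ((∑ j, ‖(M ^ k) i0 j‖₊ : ℝ≥0) : ℝ) := by
            push_cast
            exact Finset.sum_congr rfl fun j _ => (Real.norm_of_nonneg (hMp k i0 j)).symm
        _ ≤ _ := NNReal.coe_le_coe.mpr h4
    have h5 : C * r ^ k ≤ ∑ j, (M ^ k) i0 j := by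
      rw [hC, div_mul_eq_mul_div, div_le_iff₀ hZpos]
      calc z i0 * r ^ k = r ^ k * z i0 := by ring
        _ ≤ ((M ^ k) *ᵥ z) i0 := h1
        _ ≤ (∑ j, (M ^ k) i0 j) * Z := h2
    exact le_trans h5 h3
  set A : Matrix (Fin n) (Fin n) ℂ := M.map ((↑) : ℝ → ℂ) with hA
  have hmapk : ∀ k : ℕ, A ^ k = (M ^ k).map ((↑) : ℝ → ℂ) := by
    intro k
    induction k with
    | zero =>
      rw [pow_zero, pow_zero]
      exact (Matrix.map_one _ Complex.ofReal_zero Complex.ofReal_one).symm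
    | succ m ih =>
      rw [pow_succ, pow_succ, ih]
      ext i j
      simp only [Matrix.mul_apply, Matrix.map_apply]
      push_cast
      rfl
  have hnnA : ∀ k : ℕ, ‖A ^ k‖₊ = ‖M ^ k‖₊ := by
    intro k
    rw [hmapk k, Matrix.linfty_opNNNorm_def, Matrix.linfty_opNNNorm_def]
    congr 1
    funext i
    exact Finset.sum_congr rfl fun j _ => by
      simp [Matrix.map_apply, Complex.nnnorm_real]
  haveI : CompleteSpace (Matrix (Fin n) (Fin n) ℂ) := FiniteDimensional.complete ℂ _
  have hgel := spectrum.pow_nnnorm_pow_one_div_tendsto_nhds_spectralRadius A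
  have hb : Tendsto (fun k : ℕ => C ^ (1/(k:ℝ)) * r) atTop (𝓝 r) := by
    have h1 : Tendsto (fun k : ℕ => (1:ℝ)/k) atTop (𝓝 0) :=
      tendsto_one_div_atTop_nhds_zero_nat
    have hc : Continuous fun t : ℝ => C ^ t := by
      have : (fun t : ℝ => C ^ t) = fun t : ℝ => Real.exp (Real.log C * t) := by
        funext t; rw [Real.rpow_def_of_pos hCpos]
      rw [this]
      exact Real.continuous_exp.comp (continuous_const.mul continuous_id)
    have h2 : Tendsto (fun k : ℕ => C ^ (1/(k:ℝ))) atTop (𝓝 1) := by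
      have := (hc.tendsto 0).comp h1
      simpa [Real.rpow_zero, Function.comp_def] using this
    simpa using h2.mul (tendsto_const_nhds : Tendsto (fun _ : ℕ => r) atTop (𝓝 r))
  have hlow : Tendsto (fun k : ℕ => ENNReal.ofReal (C ^ (1/(k:ℝ)) * r)) atTop
      (𝓝 (ENNReal.ofReal r)) := (ENNReal.continuous_ofReal.tendsto r).comp hb
  have hle : ∀ᶠ k : ℕ in atTop,
      ENNReal.ofReal (C ^ (1/(k:ℝ)) * r) ≤ (‖A ^ k‖₊ : ℝ≥0∞) ^ (1/(k:ℝ)) := by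
    filter_upwards [eventually_ge_atTop 1] with k hk
    have hkpos : (0:ℝ) < (k:ℝ) := by exact_mod_cast hk
    have e1 : C ^ (1/(k:ℝ)) * r = (C * r ^ k) ^ (1/(k:ℝ)) := by
      rw [Real.mul_rpow hCpos.le (pow_nonneg hr.le k), ← Real.rpow_natCast r k,
        ← Real.rpow_mul hr.le, mul_one_div, div_self (ne_of_gt hkpos), Real.rpow_one]
    rw [e1, ← ENNReal.ofReal_rpow_of_pos (by positivity)]
    apply ENNReal.rpow_le_rpow _ (by positivity)
    calc ENNReal.ofReal (C * r ^ k) ≤ ENNReal.ofReal ‖M ^ k‖ :=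
          ENNReal.ofReal_le_ofReal (hnorm k)
      _ = (‖M ^ k‖₊ : ℝ≥0∞) := ofReal_norm _
      _ = (‖A ^ k‖₊ : ℝ≥0∞) := by rw [hnnA k]
  have hrle : ENNReal.ofReal r ≤ spectralRadius ℂ A :=
    le_of_tendsto_of_tendsto hlow hgel hle
  haveI : Nontrivial (Matrix (Fin n) (Fin n) ℂ) := by
    refine ⟨0, 1, fun h => ?_⟩
    have := congrFun (congrFun h i0) i0
    simp [Matrix.one_apply] at this
  have hne := spectrum.nonempty A
  obtain ⟨μ, hμ, hμeq⟩ := spectrum.exists_nnnorm_eq_spectralRadius_of_nonempty hne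
  have h1 : r ≤ ‖μ‖ := by
    have h2 : ENNReal.ofReal r ≤ (‖μ‖₊ : ℝ≥0∞) := hμeq ▸ hrle
    rw [← enorm_eq_nnnorm, ← ofReal_norm] at h2
    exact (ENNReal.ofReal_le_ofReal_iff (norm_nonneg μ)).mp h2
  have hbdd : BddAbove {s : ℝ | ∃ ν ∈ spectrum ℂ A, s = ‖ν‖} := by
    refine ⟨‖A‖, ?_⟩
    rintro s ⟨ν, hν, rfl⟩
    exact spectrum.norm_le_norm_of_mem hν
  have hmem : ‖μ‖ ∈ {s : ℝ | ∃ ν ∈ spectrum ℂ A, s = ‖ν‖} :=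
    ⟨μ, hμ, rfl⟩
  calc r ≤ ‖μ‖ := h1
    _ = ‖μ‖ := rfl
    _ ≤ radius M := le_csSup hbdd hmem



set_option maxHeartbeats 1000000

/-- For `2 ≤ g ≤ n-1`, with `x` the positive unit eigenvector of
`Q(C_{n,g})` corresponding to `q(C_{n,g})` (the paper's vertex `u_j` is the index `j-1`):
(1) `x_{u_{g+1}} < x_{u_{g+2}} < ⋯ < x_{u_n} < x_{u_1} < x_{u_2} < ⋯ < x_{u_g}`, and
(2) `q(C'_{n,g}) > q(C_{n,g})`. -/
theorem eigenvector_Cng_and_q_Cng' {n g : ℕ} (hg : 2 ≤ g) (hgn : g ≤ n - 1)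
    (x : Fin n → ℝ) (hxpos : ∀ i, 0 < x i) (hxunit : ∑ i, (x i) ^ 2 = 1)
    (hxeig : Qmat (Cng n g) *ᵥ x = q (Cng n g) • x) :
    ((∀ i : ℕ, ∀ _h1 : g ≤ i, ∀ _h2 : i + 1 ≤ n - 1,
        x ⟨i, by omega⟩ < x ⟨i + 1, by omega⟩) ∧
      x ⟨n - 1, by omega⟩ < x ⟨0, by omega⟩ ∧
      (∀ i : ℕ, ∀ _h : i + 1 ≤ g - 1, x ⟨i, by omega⟩ < x ⟨i + 1, by omega⟩)) ∧
    q (Cng n g) < q (Cng' n g) := by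
  have hn : 3 ≤ n := by omega
  obtain ⟨Q, hQdef⟩ : ∃ t : ℝ, q (Cng n g) = t := ⟨_, rfl⟩
  rw [hQdef] at hxeig ⊢
  have heig : ∀ i, (Qmat (Cng n g) *ᵥ x) i = Q * x i := by
    intro i; rw [hxeig]; simp
  have eqA : ∀ (i : Fin n) (h1 : (i:ℕ) ≠ g - 1) (h2 : (i:ℕ) + 1 < n),
      x i + x ⟨(i:ℕ)+1, h2⟩ = Q * x i := by
    intro i h1 h2
    rw [← heig i, QrowA (Cng n g) x i ⟨(i:ℕ)+1, h2⟩ (Cng_rowA i h1 h2)]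
  have eqB : 2 * x ⟨g-1, by omega⟩ + (x ⟨g, by omega⟩ + x ⟨0, by omega⟩)
      = Q * x ⟨g-1, by omega⟩ := by
    rw [← heig ⟨g-1, by omega⟩,
      QrowB (Cng n g) x ⟨g-1, by omega⟩ ⟨g, by omega⟩ ⟨0, by omega⟩
        (Cng_rowB hg hgn _ rfl)]
  have eqC : x ⟨n-1, by omega⟩ + x ⟨0, by omega⟩ = Q * x ⟨n-1, by omega⟩ := by
    rw [← heig ⟨n-1, by omega⟩,
      QrowA (Cng n g) x ⟨n-1, by omega⟩ ⟨0, by omega⟩ (Cng_rowC hg hgn _ rfl)]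
  have hQ2 : 2 < Q := by
    have p1 := hxpos (⟨g-1, by omega⟩ : Fin n)
    have p2 := hxpos (⟨g, by omega⟩ : Fin n)
    have p3 := hxpos (⟨0, by omega⟩ : Fin n)
    nlinarith [p1, p2, p3]
  have step : ∀ (i : ℕ) (h1 : i ≠ g - 1) (h2 : i + 1 < n),
      x ⟨i, by omega⟩ < x ⟨i+1, h2⟩ := by
    intro i h1 h2
    have he := eqA ⟨i, by omega⟩ h1 h2
    have p := hxpos (⟨i, by omega⟩ : Fin n)
    nlinarith [he, p]
  have part1a : ∀ i : ℕ, ∀ _h1 : g ≤ i, ∀ _h2 : i + 1 ≤ n - 1,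
      x ⟨i, by omega⟩ < x ⟨i + 1, by omega⟩ := by
    intro i h1 h2; exact step i (by omega) (by omega)
  have part1b : x ⟨n - 1, by omega⟩ < x ⟨0, by omega⟩ := by
    have p := hxpos (⟨n-1, by omega⟩ : Fin n)
    nlinarith [eqC, p]
  have part1c : ∀ i : ℕ, ∀ _h : i + 1 ≤ g - 1,
      x ⟨i, by omega⟩ < x ⟨i + 1, by omega⟩ := by
    intro i h; exact step i (by omega) (by omega)
  refine ⟨⟨part1a, part1b, part1c⟩, ?_⟩
  -- Part 2
  have hQpos : 0 < Q := by linarith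
  have hx0g : x ⟨0, by omega⟩ < x ⟨g-1, by omega⟩ := by
    have key : ∀ m : ℕ, ∀ hm : m ≤ g - 1,
        x ⟨0, by omega⟩ < x ⟨m, by omega⟩ ∨ m = 0 := by
      intro m
      induction m with
      | zero => intro _; right; rfl
      | succ k ih =>
        intro hm
        have hstep := step k (by omega) (by omega)
        rcases ih (by omega) with h | h
        · left; exact lt_trans h hstep
        · left; subst h; exact hstep
    rcases key (g-1) le_rfl with h | h
    · exact h
    · omega
  have hDpos : 0 < (Q - 1) * Q ^ (n - 1) + 1 := by
    have := pow_pos hQpos (n-1)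
    nlinarith
  obtain ⟨ε, hεpos, hεc⟩ : ∃ ε : ℝ, 0 < ε ∧
      ε * ((Q - 1) * Q ^ (n - 1) + 1) = x ⟨g-1, by omega⟩ - x ⟨0, by omega⟩ :=
    ⟨(x ⟨g-1, by omega⟩ - x ⟨0, by omega⟩) / ((Q - 1) * Q ^ (n - 1) + 1),
      div_pos (by linarith) hDpos, div_mul_cancel₀ _ (ne_of_gt hDpos)⟩
  obtain ⟨z, hzdef⟩ : ∃ z : Fin n → ℝ, z = fun j => x j + ε * Q ^ (j:ℕ) := ⟨_, rfl⟩
  have hzval : ∀ (m : ℕ) (h : m < n), z ⟨m, h⟩ = x ⟨m, h⟩ + ε * Q ^ m := by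
    intro m h; rw [hzdef]
  have hzpos : ∀ j, 0 < z j := by
    intro j; rw [hzdef]
    exact add_pos (hxpos j) (mul_pos hεpos (pow_pos hQpos _))
  have eqA' : ∀ (i : Fin n) (h1 : (i:ℕ) ≠ g - 1) (h2 : (i:ℕ) + 1 < n),
      (Qmat (Cng' n g) *ᵥ z) i = z i + z ⟨(i:ℕ)+1, h2⟩ :=
    fun i h1 h2 => QrowA _ z i _ (Cng'_rowA i h1 h2)
  have eqB' : (Qmat (Cng' n g) *ᵥ z) ⟨g-1, by omega⟩ =
      2 * z ⟨g-1, by omega⟩ + (z ⟨g, by omega⟩ + z ⟨0, by omega⟩) :=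
    QrowB _ z _ _ _ (Cng'_rowB hg hgn _ rfl)
  have eqC' : (Qmat (Cng' n g) *ᵥ z) ⟨n-1, by omega⟩ =
      z ⟨n-1, by omega⟩ + z ⟨g-1, by omega⟩ :=
    QrowA _ z _ _ (Cng'_rowC hg hgn _ rfl)
  have hrow : ∀ i, Q * z i < (Qmat (Cng' n g) *ᵥ z) i := by
    intro i
    have hilt := i.isLt
    by_cases hi1 : (i:ℕ) = n - 1
    · rw [show i = ⟨n-1, by omega⟩ from Fin.ext hi1, eqC',
        hzval (n-1) (by omega), hzval (g-1) (by omega)]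
      have p1 := pow_pos hQpos (g-1)
      have p2 := pow_pos hQpos (n-1)
      nlinarith [eqC, hεc, mul_pos hεpos p1, mul_pos hεpos p2, hεpos]
    · by_cases hi2 : (i:ℕ) = g - 1
      · rw [show i = ⟨g-1, by omega⟩ from Fin.ext hi2, eqB',
          hzval (g-1) (by omega), hzval g (by omega), hzval 0 (by omega)]
        have e1 : Q ^ g = Q ^ (g-1) * Q := by
          rw [← pow_succ]; congr 1; omega
        have p1 := pow_pos hQpos (g-1)
        nlinarith [eqB, e1, mul_pos hεpos p1, hεpos]
      · have h2 : (i:ℕ) + 1 < n := by omega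
        have hz_i : z i = x i + ε * Q ^ (i:ℕ) := by rw [hzdef]
        rw [eqA' i hi2 h2, hzval ((i:ℕ)+1) h2, hz_i]
        have e1 : Q ^ ((i:ℕ)+1) = Q ^ (i:ℕ) * Q := pow_succ Q (i:ℕ)
        have p1 := pow_pos hQpos (i:ℕ)
        nlinarith [eqA i hi2 h2, e1, mul_pos hεpos p1]
  have hne : (Finset.univ : Finset (Fin n)).Nonempty :=
    ⟨⟨0, by omega⟩, Finset.mem_univ _⟩
  obtain ⟨δ, hδdef⟩ : ∃ t : ℝ, t = Finset.univ.inf' hne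
      (fun i => ((Qmat (Cng' n g) *ᵥ z) i - Q * z i) / z i) := ⟨_, rfl⟩
  have hδpos : 0 < δ := by
    rw [hδdef, Finset.lt_inf'_iff]
    intro i _
    exact div_pos (sub_pos.mpr (hrow i)) (hzpos i)
  have hrz : ∀ i, (Q + δ) * z i ≤ (Qmat (Cng' n g) *ᵥ z) i := by
    intro i
    have h1 : δ ≤ ((Qmat (Cng' n g) *ᵥ z) i - Q * z i) / z i := by
      rw [hδdef]
      exact Finset.inf'_le _ (Finset.mem_univ i)
    rw [le_div_iff₀ (hzpos i)] at h1
    have e : (Q + δ) * z i = Q * z i + δ * z i := by ring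
    linarith [h1]
  have hMnn : ∀ i j, 0 ≤ Qmat (Cng' n g) i j := by
    intro i j
    simp only [Qmat, Matrix.add_apply, Matrix.diagonal_apply, adjMat]
    apply add_nonneg
    · split
      · exact Nat.cast_nonneg _
      · exact le_refl 0
    · exact Nat.cast_nonneg _
  have hfinal : Q + δ ≤ radius (Qmat (Cng' n g)) :=
    le_radius_of_mulVec_le (by omega) (Qmat (Cng' n g)) hMnn z hzpos (Q + δ)
      (by linarith) hrz
  have hq' : q (Cng' n g) = radius (Qmat (Cng' n g)) := rfl
  rw [hq']
  linarith


end SignlessDigraph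
end

section
/- Let n ≥ 4. Then 2 = q(C_n^→) < q(C_{n,n−1}) < q(C_{n,n−2}) < ⋯ < q(C_{n,2}) < 3; that is, q(C_{n,g+1}) < q(C_{n,g}) for every g with 2 ≤ g ≤ n−2, q(C_{n,n−1}) > 2, and q(C_{n,2}) < 3. -/
open Matrix

namespace SignlessDigraph

variable {n : ℕ}

section Aux

/-! ### Auxiliary machinery for Statement 13 -/

lemma mem_spec (M : Matrix (Fin n) (Fin n) ℝ) (μ : ℂ) :
    μ ∈ spectrum ℂ (M.map ((↑) : ℝ → ℂ)) ↔
      ∃ v : Fin n → ℂ, v ≠ 0 ∧ (M.map ((↑) : ℝ → ℂ)).mulVec v = μ • v := by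
  rw [spectrum.mem_iff, Matrix.isUnit_iff_isUnit_det, isUnit_iff_ne_zero, not_not,
    ← Matrix.exists_mulVec_eq_zero_iff]
  have halg : ∀ v : Fin n → ℂ,
      (algebraMap ℂ (Matrix (Fin n) (Fin n) ℂ) μ).mulVec v = μ • v := by
    intro v
    rw [Matrix.algebraMap_eq_diagonal]
    funext i
    simp [Matrix.mulVec_diagonal]
  constructor
  · rintro ⟨v, hv, h⟩
    refine ⟨v, hv, ?_⟩
    rw [Matrix.sub_mulVec, halg, sub_eq_zero] at h
    exact h.symm
  · rintro ⟨v, hv, h⟩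
    exact ⟨v, hv, by rw [Matrix.sub_mulVec, halg, h, sub_self]⟩

lemma mulVec_Q (W : Fin n → Fin n → ℕ) (v : Fin n → ℂ) (i : Fin n) :
    ((Qmat W).map ((↑) : ℝ → ℂ)).mulVec v i
      = (outdeg W i : ℂ) * v i + ∑ j, (W i j : ℂ) * v j := by
  simp only [Matrix.mulVec, dotProduct, Matrix.map_apply, Qmat, Matrix.add_apply,
    adjMat, Matrix.diagonal_apply]
  push_cast [apply_ite ((↑) : ℝ → ℂ)]
  simp only [add_mul]
  rw [Finset.sum_add_distrib]
  congr 1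
  rw [Finset.sum_eq_single i] <;> simp +contextual [eq_comm]

lemma sum_ind (m : ℕ) (f : Fin n → ℂ) :
    ∑ j : Fin n, (if (j : ℕ) = m then f j else 0) = if h : m < n then f ⟨m, h⟩ else 0 := by
  split_ifs with h
  · rw [Finset.sum_eq_single ⟨m, h⟩] <;> simp +contextual [Fin.ext_iff]
  · apply Finset.sum_eq_zero; intro j _; rw [if_neg]; omega

lemma cng_split {g : ℕ} (i j : Fin n) :
    Cng n g i j = (if (j : ℕ) = (i : ℕ) + 1 then 1 else 0)
      + (if ((i : ℕ) = g - 1 ∨ (i : ℕ) = n - 1) ∧ (j : ℕ) = 0 then 1 else 0) := by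
  unfold Cng
  split_ifs <;> omega

lemma cng_row {g : ℕ} (hn : 4 ≤ n) (hg2 : 2 ≤ g) (hgn : g ≤ n - 1) (v : Fin n → ℂ) (i : Fin n) :
    ((Qmat (Cng n g)).map ((↑) : ℝ → ℂ)).mulVec v i
      = (if (i : ℕ) = g - 1 then 2 else 1) * v i
        + (if h : (i : ℕ) + 1 < n then v ⟨(i : ℕ) + 1, h⟩ else 0)
        + (if (i : ℕ) = g - 1 ∨ (i : ℕ) = n - 1 then v ⟨0, by omega⟩ else 0) := by
  rw [mulVec_Q]
  have hsum : ∀ f : Fin n → ℂ, ∑ j, (Cng n g i j : ℂ) * f j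
      = (if h : (i : ℕ) + 1 < n then f ⟨(i : ℕ) + 1, h⟩ else 0)
        + (if (i : ℕ) = g - 1 ∨ (i : ℕ) = n - 1 then f ⟨0, by omega⟩ else 0) := by
    intro f
    have : ∀ j : Fin n, (Cng n g i j : ℂ) * f j
        = (if (j : ℕ) = (i : ℕ) + 1 then f j else 0)
          + (if (i : ℕ) = g - 1 ∨ (i : ℕ) = n - 1 then (if (j : ℕ) = 0 then f j else 0) else 0) := by
      intro j
      rw [cng_split]
      push_cast
      by_cases h1 : (j : ℕ) = (i : ℕ) + 1 <;> by_cases h2 : (i : ℕ) = g - 1 ∨ (i : ℕ) = n - 1 <;>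
        by_cases h3 : (j : ℕ) = 0 <;> simp [h1, h2, h3] <;> omega
    rw [Finset.sum_congr rfl (fun j _ => this j), Finset.sum_add_distrib, sum_ind]
    congr 1
    split_ifs with h2
    · rw [sum_ind]; rw [dif_pos (by omega)]
    · exact Finset.sum_const_zero
  rw [hsum]
  have hdeg : (outdeg (Cng n g) i : ℂ) = if (i : ℕ) = g - 1 then 2 else 1 := by
    have : (outdeg (Cng n g) i : ℂ) = ∑ j, (Cng n g i j : ℂ) := by
      unfold outdeg; push_cast; rfl
    rw [this]
    have h1 := hsum (fun _ => 1)
    simp only [mul_one] at h1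
    rw [h1]
    split_ifs <;> norm_num <;> omega
  rw [hdeg, add_assoc]

lemma cng_spectrum {g : ℕ} (hn : 4 ≤ n) (hg2 : 2 ≤ g) (hgn : g ≤ n - 1) (μ : ℂ) :
    μ ∈ spectrum ℂ ((Qmat (Cng n g)).map ((↑) : ℝ → ℂ)) ↔
      (μ - 2) * (μ - 1) ^ (n - 1) = (μ - 1) ^ (n - g) + 1 := by
  have e1 : (μ - 1) * (μ - 1) ^ (n - 1 - g) = (μ - 1) ^ (n - g) := by
    rw [← pow_succ']; congr 1; omega
  have e2 : (μ - 1) ^ (n - g) * (μ - 1) ^ (g - 1) = (μ - 1) ^ (n - 1) := by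
    rw [← pow_add]; congr 1; omega
  rw [mem_spec]
  constructor
  · rintro ⟨v, hv, heq⟩
    set w : ℕ → ℂ := fun k => if hk : k < n then v ⟨k, hk⟩ else 0 with hw
    have hrow : ∀ k, k < n →
        (if k = g - 1 then (2:ℂ) else 1) * w k + (if k + 1 < n then w (k + 1) else 0)
          + (if k = g - 1 ∨ k = n - 1 then w 0 else 0) = μ * w k := by
      intro k hk
      have h := congrFun heq ⟨k, hk⟩
      rw [cng_row hn hg2 hgn] at h
      simp only [Pi.smul_apply, smul_eq_mul] at h
      by_cases hk1 : k + 1 < n <;>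
        simpa [hw, hk, hk1, show (0:ℕ) < n by omega] using h
    have R1 : ∀ k, k < n → k ≠ g - 1 → k ≠ n - 1 → w (k + 1) = (μ - 1) * w k := by
      intro k hk h1 h2
      have h := hrow k hk
      rw [if_neg h1, if_pos (by omega : k + 1 < n), if_neg (by tauto)] at h
      linear_combination h
    have R2 : w g = (μ - 2) * w (g - 1) - w 0 := by
      have h := hrow (g - 1) (by omega)
      rw [if_pos rfl, if_pos (by omega : g - 1 + 1 < n), if_pos (Or.inl rfl),
        show g - 1 + 1 = g by omega] at h
      linear_combination h
    have R3 : w 0 = (μ - 1) * w (n - 1) := by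
      have h := hrow (n - 1) (by omega)
      rw [if_neg (by omega), if_neg (by omega), if_pos (Or.inr rfl)] at h
      linear_combination h
    have A : ∀ k, k ≤ g - 1 → w k = (μ - 1) ^ k * w 0 := by
      intro k
      induction k with
      | zero => intro _; simp
      | succ k ih =>
        intro hk
        rw [R1 k (by omega) (by omega) (by omega), ih (by omega), pow_succ]
        ring
    have C : ∀ d, g + d ≤ n - 1 → w (g + d) = (μ - 1) ^ d * w g := by
      intro d
      induction d with
      | zero => intro _; simp
      | succ d ih =>
        intro hd
        have hgd : g + (d + 1) = (g + d) + 1 := by omega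
        rw [hgd, R1 (g + d) (by omega) (by omega) (by omega), ih (by omega), pow_succ]
        ring
    have hw0 : w 0 ≠ 0 := by
      intro h0
      apply hv
      funext i
      have hi := i.isLt
      have hwi : w (i : ℕ) = 0 := by
        rcases le_or_gt (i : ℕ) (g - 1) with h | h
        · rw [A _ h, h0, mul_zero]
        · obtain ⟨d, hd⟩ : ∃ d, (i : ℕ) = g + d := ⟨(i : ℕ) - g, by omega⟩
          rw [hd, C d (by omega), R2, A (g - 1) le_rfl, h0]
          ring
      simpa [hw, hi] using hwi
    have h4 : w 0 = (μ - 1) ^ (n - g) * w g := by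
      have hC := C (n - 1 - g) (by omega)
      rw [show g + (n - 1 - g) = n - 1 by omega] at hC
      rw [R3, hC, ← mul_assoc, e1]
    have h5 : w g = (μ - 2) * (μ - 1) ^ (g - 1) * w 0 - w 0 := by
      rw [R2, A (g - 1) le_rfl]; ring
    have h7 : ((μ - 2) * (μ - 1) ^ (n - 1) - (μ - 1) ^ (n - g) - 1) * w 0 = 0 := by
      linear_combination -h4 - (μ - 1) ^ (n - g) * h5 - (μ - 2) * (w 0) * e2
    rcases mul_eq_zero.mp h7 with h | h
    · linear_combination h
    · exact absurd h hw0
  · intro hroot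
    set C0 : ℂ := (μ - 2) * (μ - 1) ^ (g - 1) - 1 with hC0
    refine ⟨fun i => if (i : ℕ) ≤ g - 1 then (μ - 1) ^ (i : ℕ) else (μ - 1) ^ ((i : ℕ) - g) * C0,
      ?_, ?_⟩
    · intro h
      have h0 := congrFun h ⟨0, by omega⟩
      simp only [Pi.zero_apply] at h0
      rw [if_pos (by omega)] at h0
      simpa using h0
    · funext i
      rw [cng_row hn hg2 hgn]
      simp only [Pi.smul_apply, smul_eq_mul]
      have hkey : (μ - 1) ^ (n - g) * C0 = 1 := by
        rw [hC0]
        linear_combination hroot + (μ - 2) * e2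
      by_cases h1 : (i : ℕ) = g - 1
      · rw [if_pos h1, if_pos (Or.inl h1), dif_pos (by omega : (i : ℕ) + 1 < n)]
        simp only [h1]
        rw [if_pos le_rfl, if_pos (by omega : (0:ℕ) ≤ g - 1),
          show g - 1 + 1 = g by omega, if_neg (by omega : ¬ g ≤ g - 1),
          Nat.sub_self, pow_zero, hC0]
        ring
      · by_cases h2 : (i : ℕ) = n - 1
        · rw [if_neg h1, if_pos (Or.inr h2), dif_neg (by omega : ¬ (i : ℕ) + 1 < n)]
          simp only [h2]
          rw [if_neg (by omega : ¬ n - 1 ≤ g - 1), if_pos (by omega : (0:ℕ) ≤ g - 1), pow_zero]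
          linear_combination -hkey - C0 * e1
        · rw [if_neg h1, if_neg (by omega : ¬ ((i : ℕ) = g - 1 ∨ (i : ℕ) = n - 1)),
            dif_pos (by omega : (i : ℕ) + 1 < n)]
          by_cases hle : (i : ℕ) ≤ g - 1
          · rw [if_pos hle, if_pos (by omega : (i : ℕ) + 1 ≤ g - 1), pow_succ]
            ring
          · rw [if_neg hle, if_neg (by omega : ¬ (i : ℕ) + 1 ≤ g - 1),
              show (i : ℕ) + 1 - g = ((i : ℕ) - g) + 1 by omega, pow_succ]
            ring

lemma cyc_row (hn : 0 < n) (v : Fin n → ℂ) (i : Fin n) :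
    ((Qmat (cyc n)).map ((↑) : ℝ → ℂ)).mulVec v i
      = v i + v ⟨((i : ℕ) + 1) % n, Nat.mod_lt _ hn⟩ := by
  rw [mulVec_Q]
  have hsum : ∀ f : Fin n → ℂ,
      ∑ j, (cyc n i j : ℂ) * f j = f ⟨((i : ℕ) + 1) % n, Nat.mod_lt _ hn⟩ := by
    intro f
    have : ∀ j : Fin n, (cyc n i j : ℂ) * f j
        = if (j : ℕ) = ((i : ℕ) + 1) % n then f j else 0 := by
      intro j
      unfold cyc
      split_ifs <;> simp
    rw [Finset.sum_congr rfl (fun j _ => this j), sum_ind, dif_pos (Nat.mod_lt _ hn)]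
  rw [hsum]
  have hdeg : (outdeg (cyc n) i : ℂ) = 1 := by
    have h : (outdeg (cyc n) i : ℂ) = ∑ j, (cyc n i j : ℂ) := by unfold outdeg; push_cast; rfl
    have h1 := hsum (fun _ => 1)
    simp only [mul_one] at h1
    rw [h, h1]
  rw [hdeg, one_mul]

lemma cyc_spectrum (hn : 0 < n) (μ : ℂ) :
    μ ∈ spectrum ℂ ((Qmat (cyc n)).map ((↑) : ℝ → ℂ)) ↔ (μ - 1) ^ n = 1 := by
  rw [mem_spec]
  constructor
  · rintro ⟨v, hv, heq⟩
    set w : ℕ → ℂ := fun k => if hk : k < n then v ⟨k, hk⟩ else 0 with hw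
    have hrow : ∀ k, k < n → w k + w ((k + 1) % n) = μ * w k := by
      intro k hk
      have h := congrFun heq ⟨k, hk⟩
      rw [cyc_row hn] at h
      simp only [Pi.smul_apply, smul_eq_mul] at h
      simpa [hw, hk, Nat.mod_lt _ hn] using h
    have A : ∀ k, k < n → w k = (μ - 1) ^ k * w 0 := by
      intro k
      induction k with
      | zero => intro _; simp
      | succ k ih =>
        intro hk
        have h := hrow k (by omega)
        rw [Nat.mod_eq_of_lt (by omega : k + 1 < n)] at h
        have h' : w (k + 1) = (μ - 1) * w k := by linear_combination h
        rw [h', ih (by omega), pow_succ]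
        ring
    have hw0 : w 0 ≠ 0 := by
      intro h0
      apply hv
      funext i
      have hi := i.isLt
      have : w (i : ℕ) = 0 := by rw [A _ hi, h0, mul_zero]
      simpa [hw, hi] using this
    have hlast := hrow (n - 1) (by omega)
    rw [show n - 1 + 1 = n by omega, Nat.mod_self] at hlast
    have h1 : w 0 = (μ - 1) * w (n - 1) := by linear_combination hlast
    rw [A (n - 1) (by omega)] at h1
    have h2 : ((μ - 1) ^ n - 1) * w 0 = 0 := by
      rw [show n = (n - 1) + 1 by omega, pow_succ]
      linear_combination -h1
    rcases mul_eq_zero.mp h2 with h | h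
    · linear_combination h
    · exact absurd h hw0
  · intro hroot
    refine ⟨fun i => (μ - 1) ^ (i : ℕ), ?_, ?_⟩
    · intro h
      have h0 := congrFun h ⟨0, hn⟩
      simpa using h0
    · funext i
      rw [cyc_row hn]
      simp only [Pi.smul_apply, smul_eq_mul]
      rcases Nat.lt_or_ge ((i : ℕ) + 1) n with h | h
      · rw [show ((i : ℕ) + 1) % n = (i : ℕ) + 1 from Nat.mod_eq_of_lt h, pow_succ]
        ring
      · have hi : (i : ℕ) = n - 1 := by omega
        rw [show (i : ℕ) + 1 = n by omega, Nat.mod_self]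
        simp only [pow_zero, hi]
        have h3 : (μ - 1) * (μ - 1) ^ (n - 1) = 1 := by
          rw [← pow_succ', show (n - 1) + 1 = n by omega, hroot]
        linear_combination -h3

/-- `Pr b g1 t = (t-1) t^(b+g1) - t^b - 1`; with `b = n-g`, `g1 = g-1` this is the
characteristic equation of `Q(C_{n,g})` in `t = q-1`. -/
def Pr (b g1 : ℕ) (t : ℝ) : ℝ := (t - 1) * t ^ (b + g1) - t ^ b - 1

lemma Pr_mono {b g1 : ℕ} (hg1 : 1 ≤ g1) {s r : ℝ} (hs : 0 < s) (hsr : s < r)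
    (hPs : 0 ≤ Pr b g1 s) : 0 < Pr b g1 r := by
  have hr : 0 < r := hs.trans hsr
  have key : s ^ (b + g1 + 1) * Pr b g1 r - r ^ (b + g1 + 1) * Pr b g1 s
      = r ^ (b + g1) * s ^ (b + g1) * (r - s)
        + (r ^ b * s ^ b) * (r ^ (g1 + 1) - s ^ (g1 + 1))
        + (r ^ (b + g1 + 1) - s ^ (b + g1 + 1)) := by
    unfold Pr; ring
  have t1 : 0 < r ^ (b + g1) * s ^ (b + g1) * (r - s) :=
    mul_pos (by positivity) (sub_pos.mpr hsr)
  have t2 : 0 < (r ^ b * s ^ b) * (r ^ (g1 + 1) - s ^ (g1 + 1)) := by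
    have h := pow_lt_pow_left₀ hsr hs.le (n := g1 + 1) (by omega)
    have hb : (0:ℝ) < r ^ b * s ^ b := by positivity
    nlinarith
  have t3 : 0 < r ^ (b + g1 + 1) - s ^ (b + g1 + 1) := by
    have h := pow_lt_pow_left₀ hsr hs.le (n := b + g1 + 1) (by omega)
    linarith
  have hsn : (0:ℝ) < s ^ (b + g1 + 1) := by positivity
  have hrn : (0:ℝ) ≤ r ^ (b + g1 + 1) * Pr b g1 s := by positivity
  nlinarith

lemma Pr_root_exists {b g1 : ℕ} (hb : 1 ≤ b) (hg1 : 1 ≤ g1) :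
    ∃ t ∈ Set.Ioo (1:ℝ) 2, Pr b g1 t = 0 := by
  have hc : ContinuousOn (Pr b g1) (Set.Icc 1 2) := by
    apply Continuous.continuousOn; unfold Pr; continuity
  have h1 : Pr b g1 1 = -2 := by unfold Pr; norm_num
  have h2 : 0 < Pr b g1 2 := by
    unfold Pr
    have h2b : (2:ℝ) ^ (b + 1) ≤ 2 ^ (b + g1) :=
      pow_le_pow_right₀ (by norm_num) (by omega)
    have h2c : (1:ℝ) ≤ 2 ^ b := one_le_pow₀ (by norm_num)
    have h2d : (2:ℝ) ≤ 2 ^ b := by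
      calc (2:ℝ) = 2 ^ 1 := (pow_one 2).symm
      _ ≤ 2 ^ b := pow_le_pow_right₀ (by norm_num) hb
    rw [pow_succ] at h2b
    nlinarith
  have hIVT := intermediate_value_Ioo (by norm_num : (1:ℝ) ≤ 2) hc
  have h0 : (0:ℝ) ∈ Set.Ioo (Pr b g1 1) (Pr b g1 2) := by
    rw [h1]; exact ⟨by norm_num, h2⟩
  obtain ⟨t, htm, ht⟩ := hIVT h0
  exact ⟨t, htm, ht⟩

lemma Pr_succ (b g1 : ℕ) (t : ℝ) :
    Pr b (g1 + 1) t = Pr (b + 1) g1 t + t ^ b * (t - 1) := by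
  unfold Pr; ring

lemma Pr_lt {g : ℕ} (hn : 4 ≤ n) (hg2 : 2 ≤ g) (hgn : g ≤ n - 2) {t t' : ℝ}
    (ht : t ∈ Set.Ioo (1:ℝ) 2) (hroot : Pr (n - g) (g - 1) t = 0)
    (hroot' : Pr (n - (g + 1)) g t' = 0) : t' < t := by
  have ht1 : (1:ℝ) < t := ht.1
  have hpos : 0 < Pr (n - g - 1) g t := by
    have he := Pr_succ (n - g - 1) (g - 1) t
    rw [show (g - 1) + 1 = g by omega, show (n - g - 1) + 1 = n - g by omega] at he
    have hpo : (0:ℝ) < t ^ (n - g - 1) * (t - 1) := by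
      have h0 : (0:ℝ) < t := by linarith
      have := pow_pos h0 (n - g - 1)
      nlinarith
    rw [he, hroot]; linarith
  rw [show n - (g + 1) = n - g - 1 by omega] at hroot'
  rcases lt_or_ge t' t with h | h
  · exact h
  · exfalso
    rcases eq_or_lt_of_le h with h | h
    · rw [h] at hpos; linarith [hroot', hpos]
    · have := Pr_mono (by omega : 1 ≤ g) (by linarith : (0:ℝ) < t) h hpos.le
      linarith [hroot']

lemma q_cyc_eq (hn : 0 < n) : q (cyc n) = 2 := by
  apply IsGreatest.csSup_eq
  constructor
  · refine ⟨2, ?_, ?_⟩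
    · rw [cyc_spectrum hn]; norm_num
    · rw [Complex.norm_two]
  · rintro r ⟨μ, hμ, rfl⟩
    rw [cyc_spectrum hn] at hμ
    have h1 : ‖μ - 1‖ = 1 := by
      have h := congrArg (‖·‖) hμ
      rw [norm_pow, norm_one] at h
      rcases lt_trichotomy (‖μ - 1‖) 1 with hlt | he | hgt
      · have := pow_lt_one₀ (norm_nonneg _) hlt (by omega : n ≠ 0)
        linarith
      · exact he
      · have := one_lt_pow₀ hgt (by omega : n ≠ 0)
        linarith
    calc ‖μ‖ = ‖(μ - 1) + 1‖ := by ring_nf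
    _ ≤ ‖μ - 1‖ + ‖(1:ℂ)‖ := norm_add_le _ _
    _ = 2 := by rw [h1, norm_one]; norm_num

lemma q_cng_eq {g : ℕ} (hn : 4 ≤ n) (hg2 : 2 ≤ g) (hgn : g ≤ n - 1) {t : ℝ}
    (ht1 : 1 < t) (ht2 : t < 2) (hroot : Pr (n - g) (g - 1) t = 0) :
    q (Cng n g) = 1 + t := by
  have hroot' : (t - 1) * t ^ (n - 1) = t ^ (n - g) + 1 := by
    have h := hroot
    unfold Pr at h
    rw [show (n - g) + (g - 1) = n - 1 by omega] at h
    linarith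
  apply IsGreatest.csSup_eq
  constructor
  · refine ⟨((1 + t : ℝ) : ℂ), ?_, ?_⟩
    · rw [cng_spectrum hn hg2 hgn]
      have hc : (((t : ℝ) : ℂ) - 1) * ((t : ℝ) : ℂ) ^ (n - 1) = ((t : ℝ) : ℂ) ^ (n - g) + 1 := by
        exact_mod_cast congrArg (fun x : ℝ => (x : ℂ)) hroot'
      push_cast
      push_cast at hc
      linear_combination hc
    · rw [Complex.norm_real, Real.norm_eq_abs, abs_of_pos (by linarith)]
  · rintro r ⟨μ, hμ, rfl⟩
    rw [cng_spectrum hn hg2 hgn] at hμ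
    set a := ‖μ - 1‖ with ha
    have h0a : 0 ≤ a := norm_nonneg _
    have hμn : (μ - 1) ^ (n - 1) * (μ - 1) = (μ - 1) ^ (n - 1) + (μ - 1) ^ (n - g) + 1 := by
      linear_combination hμ
    have habs : a ^ (n - 1) * a ≤ a ^ (n - 1) + a ^ (n - g) + 1 := by
      calc a ^ (n - 1) * a = ‖(μ - 1) ^ (n - 1) * (μ - 1)‖ := by
            rw [norm_mul, norm_pow]
      _ = ‖(μ - 1) ^ (n - 1) + (μ - 1) ^ (n - g) + 1‖ := by rw [hμn]
      _ ≤ ‖(μ - 1) ^ (n - 1) + (μ - 1) ^ (n - g)‖ + ‖(1:ℂ)‖ :=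
          norm_add_le _ _
      _ ≤ ‖(μ - 1) ^ (n - 1)‖ + ‖(μ - 1) ^ (n - g)‖ + ‖(1:ℂ)‖ := by
          linarith [norm_add_le ((μ - 1) ^ (n - 1)) ((μ - 1) ^ (n - g))]
      _ = a ^ (n - 1) + a ^ (n - g) + 1 := by rw [norm_pow, norm_pow, norm_one]
    have hPa : Pr (n - g) (g - 1) a ≤ 0 := by
      unfold Pr
      rw [show (n - g) + (g - 1) = n - 1 by omega]
      nlinarith [habs]
    have hat : a ≤ t := by
      by_contra hc
      push_neg at hc
      have := Pr_mono (by omega : 1 ≤ g - 1) (by linarith : (0:ℝ) < t) hc (le_of_eq hroot.symm)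
      linarith
    calc ‖μ‖ = ‖(μ - 1) + 1‖ := by ring_nf
    _ ≤ a + 1 := by simpa [ha] using norm_add_le (μ - 1) 1
    _ ≤ 1 + t := by linarith

end Aux

/-- For `n ≥ 4`:
`2 = q(C_n^→) < q(C_{n,n-1}) < q(C_{n,n-2}) < ⋯ < q(C_{n,2}) < 3`. -/
theorem q_Cng_chain {n : ℕ} (hn : 4 ≤ n) :
    q (cyc n) = 2 ∧ 2 < q (Cng n (n - 1)) ∧
    (∀ g : ℕ, 2 ≤ g → g ≤ n - 2 → q (Cng n (g + 1)) < q (Cng n g)) ∧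
    q (Cng n 2) < 3 := by
  refine ⟨q_cyc_eq (by omega), ?_, ?_, ?_⟩
  · obtain ⟨t, ⟨ht1, ht2⟩, hr⟩ := Pr_root_exists (b := n - (n - 1)) (g1 := (n - 1) - 1)
      (by omega) (by omega)
    rw [q_cng_eq hn (by omega) le_rfl ht1 ht2 hr]
    linarith
  · intro g hg2 hgn
    obtain ⟨t, ⟨ht1, ht2⟩, hr⟩ := Pr_root_exists (b := n - g) (g1 := g - 1)
      (by omega) (by omega)
    obtain ⟨t', ⟨ht1', ht2'⟩, hr'⟩ := Pr_root_exists (b := n - (g + 1)) (g1 := (g + 1) - 1)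
      (by omega) (by omega)
    have hr'' : Pr (n - (g + 1)) ((g + 1) - 1) t' = 0 := hr'
    rw [show (g + 1) - 1 = g by omega] at hr''
    have hlt : t' < t := Pr_lt hn hg2 hgn ⟨ht1, ht2⟩ hr hr''
    rw [q_cng_eq hn hg2 (by omega) ht1 ht2 hr,
      q_cng_eq hn (by omega) (by omega) ht1' ht2' hr']
    linarith
  · obtain ⟨t, ⟨ht1, ht2⟩, hr⟩ := Pr_root_exists (b := n - 2) (g1 := 2 - 1)
      (by omega) (by omega)
    rw [q_cng_eq hn le_rfl (by omega) ht1 ht2 hr]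
    linarith

end SignlessDigraph
end
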